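/- arXiv:1306.4093 — 11 statements merged into one kernel-verified Lean document; each statement's English description precedes it below -/
import Mathlib

section
/- Let X and Y be complex Banach spaces and let T ∈ L(X,Y). If S₁, S₂ ∈ L(Y,X) both satisfy T Sᵢ T = T, Sᵢ T Sᵢ = Sᵢ, and both Sᵢ T ∈ L(X) and T Sᵢ ∈ L(Y) are hermitian operators (i = 1, 2), then S₁ = S₂; that is, the Moore-Penrose inverse of an operator between Banach spaces is unique when it exists. -/
noncomputable section

open ContinuousLinearMap

/-- An operator `H` on a complex normed space is *hermitian* if `‖exp (i t H)‖ = 1`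
for all real `t`. -/
def IsHermitianOp {X : Type*} [NormedAddCommGroup X] [NormedSpace ℂ X]
    (H : X →L[ℂ] X) : Prop :=
  ∀ t : ℝ, ‖NormedSpace.exp ((Complex.I * (t : ℂ)) • H)‖ = 1

/-- `S` is a Moore–Penrose inverse of `T`: `TST = T`, `STS = S`, and `ST`, `TS` are hermitian. -/
def IsMPInv {X Y : Type*} [NormedAddCommGroup X] [NormedSpace ℂ X]
    [NormedAddCommGroup Y] [NormedSpace ℂ Y] (T : X →L[ℂ] Y) (S : Y →L[ℂ] X) : Prop :=
  T ∘L (S ∘L T) = T ∧ S ∘L (T ∘L S) = S ∧ IsHermitianOp (S ∘L T) ∧ IsHermitianOp (T ∘L S)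

/-- exp of a scalar multiple of an idempotent. -/
lemma exp_smul_idem {A : Type*} [NormedRing A] [NormedAlgebra ℂ A] [CompleteSpace A]
    (P : A) (hP : P * P = P) (c : ℂ) :
    NormedSpace.exp (c • P) = 1 + (Complex.exp c - 1) • P := by
  have hpow : ∀ n : ℕ, P ^ (n + 1) = P := by
    intro n; induction n with
    | zero => simp
    | succ n ih => rw [pow_succ, ih, hP]
  have hf : Summable fun n : ℕ => ((n.factorial : ℂ)⁻¹ * c ^ n) • P ^ n := by
    have := NormedSpace.expSeries_summable' (𝕂 := ℂ) (c • P)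
    simpa [smul_pow, smul_smul] using this
  have hsc : Summable fun n : ℕ => ((n.factorial : ℂ)⁻¹ * c ^ n) := by
    simpa [smul_eq_mul] using NormedSpace.expSeries_summable' (𝕂 := ℂ) c
  have hg : Summable fun n : ℕ => ((n.factorial : ℂ)⁻¹ * c ^ n) • P := hsc.smul_const P
  have hL : NormedSpace.exp (c • P)
      = ∑' n : ℕ, ((n.factorial : ℂ)⁻¹ * c ^ n) • P ^ n := by
    rw [NormedSpace.exp_eq_tsum ℂ]
    simp [smul_pow, smul_smul]
  have hexp : Complex.exp c = ∑' n : ℕ, ((n.factorial : ℂ)⁻¹ * c ^ n) := by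
    rw [Complex.exp_eq_exp_ℂ, NormedSpace.exp_eq_tsum ℂ]
    simp [smul_eq_mul]
  have h1 : ∑' n : ℕ, ((n.factorial : ℂ)⁻¹ * c ^ n) • P ^ n
      = 1 + ∑' n : ℕ, (((n+1).factorial : ℂ)⁻¹ * c ^ (n+1)) • P := by
    rw [Summable.tsum_eq_zero_add hf]
    simp [hpow]
  have h2 : Complex.exp c • P = P + ∑' n : ℕ, (((n+1).factorial : ℂ)⁻¹ * c ^ (n+1)) • P := by
    rw [hexp, ← Summable.tsum_smul_const hsc, Summable.tsum_eq_zero_add hg]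
    simp
  rw [hL, h1, sub_smul, one_smul, h2]
  abel

/-- A hermitian-style nilpotent is zero. -/
lemma nilpotent_eq_zero {A : Type*} [NormedRing A] [NormedAlgebra ℂ A] (N : A)
    (hN : N * N = 0) (h1 : ‖1 + N‖ ≤ 1) : N = 0 := by
  have hpow : ∀ n : ℕ, (1 + N) ^ n = 1 + (n : ℂ) • N := by
    intro n; induction n with
    | zero => simp
    | succ n ih =>
      rw [pow_succ, ih, add_mul, mul_add, mul_add, one_mul, mul_one, one_mul,
        smul_mul_assoc, hN, smul_zero, add_zero]
      push_cast
      rw [add_smul, one_smul]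
      abel
  have key : ∀ n : ℕ, (n : ℝ) * ‖N‖ ≤ 1 + ‖(1 : A)‖ := by
    intro n
    rcases Nat.eq_zero_or_pos n with h | h
    · subst h; simp; positivity
    have h2 : ‖(1 + N) ^ n‖ ≤ 1 := by
      calc ‖(1 + N) ^ n‖ ≤ ‖1 + N‖ ^ n := norm_pow_le' _ h
      _ ≤ 1 ^ n := pow_le_pow_left₀ (norm_nonneg _) h1 n
      _ = 1 := one_pow n
    have h3 : ‖(n : ℂ) • N‖ ≤ ‖(1+N)^n‖ + ‖(1:A)‖ := by
      have e : (n : ℂ) • N = (1 + N) ^ n - 1 := by rw [hpow]; abel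
      rw [e]; exact norm_sub_le _ _
    have h4 : ‖(n : ℂ) • N‖ = (n : ℝ) * ‖N‖ := by
      rw [norm_smul, Complex.norm_natCast]
    linarith
  by_contra h
  have hpos : 0 < ‖N‖ := norm_pos_iff.mpr h
  obtain ⟨n, hn⟩ := exists_nat_gt ((1 + ‖(1:A)‖) / ‖N‖)
  have := key n
  rw [div_lt_iff₀ hpos] at hn
  linarith

lemma norm_one_sub_two_smul {X : Type*} [NormedAddCommGroup X] [NormedSpace ℂ X]
    [CompleteSpace X] (P : X →L[ℂ] X) (hP : P * P = P) (hPh : IsHermitianOp P) :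
    ‖(1 : X →L[ℂ] X) - (2:ℂ) • P‖ = 1 := by
  have := hPh Real.pi
  rw [exp_smul_idem P hP] at this
  rw [mul_comm Complex.I, Complex.exp_pi_mul_I] at this
  convert this using 2
  rw [sub_eq_add_neg, ← neg_smul]
  norm_num

/-- Two hermitian idempotents absorbing each other are equal. -/
lemma herm_idem_core {X : Type*} [NormedAddCommGroup X] [NormedSpace ℂ X] [CompleteSpace X]
    (P Q : X →L[ℂ] X) (hP : P * P = P) (hQ : Q * Q = Q)
    (hPh : IsHermitianOp P) (hQh : IsHermitianOp Q)
    (hor : P * Q = Q ∧ Q * P = P ∨ P * Q = P ∧ Q * P = Q) : P = Q := by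
  have hexpP := norm_one_sub_two_smul P hP hPh
  have hexpQ := norm_one_sub_two_smul Q hQ hQh
  have hNsq : (P - Q) * (P - Q) = 0 := by
    rcases hor with ⟨h1, h2⟩ | ⟨h1, h2⟩ <;>
    · rw [sub_mul, mul_sub, mul_sub, hP, hQ, h1, h2]; abel
  have hprod : ‖((1 : X →L[ℂ] X) - (2:ℂ) • P) * ((1 : X →L[ℂ] X) - (2:ℂ) • Q)‖ ≤ 1 := by
    calc ‖((1 : X →L[ℂ] X) - (2:ℂ) • P) * ((1 : X →L[ℂ] X) - (2:ℂ) • Q)‖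
        ≤ ‖(1 : X →L[ℂ] X) - (2:ℂ) • P‖ * ‖(1 : X →L[ℂ] X) - (2:ℂ) • Q‖ := norm_mul_le _ _
      _ = 1 := by rw [hexpP, hexpQ, one_mul]
  have hsub : P - Q = 0 → P = Q := fun h => by
    have := congrArg (· + Q) h; simpa using this
  rcases hor with ⟨h1, h2⟩ | ⟨h1, h2⟩
  · have hA : ((1 : X →L[ℂ] X) - (2:ℂ) • P) * ((1 : X →L[ℂ] X) - (2:ℂ) • Q)
        = 1 + (-2:ℂ) • (P - Q) := by
      simp only [sub_mul, mul_sub, one_mul, mul_one, smul_mul_smul_comm, h1]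
      module
    have hnil : ((-2:ℂ) • (P - Q)) * ((-2:ℂ) • (P - Q)) = 0 := by
      rw [smul_mul_smul_comm, hNsq, smul_zero]
    have hz := nilpotent_eq_zero ((-2:ℂ) • (P - Q)) hnil (by rw [← hA]; exact hprod)
    apply hsub
    have h5 := congrArg (fun z => (-2:ℂ)⁻¹ • z) hz
    simpa [smul_smul] using h5
  · have hA : ((1 : X →L[ℂ] X) - (2:ℂ) • P) * ((1 : X →L[ℂ] X) - (2:ℂ) • Q)
        = 1 + (2:ℂ) • (P - Q) := by
      simp only [sub_mul, mul_sub, one_mul, mul_one, smul_mul_smul_comm, h1]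
      module
    have hnil : ((2:ℂ) • (P - Q)) * ((2:ℂ) • (P - Q)) = 0 := by
      rw [smul_mul_smul_comm, hNsq, smul_zero]
    have hz := nilpotent_eq_zero ((2:ℂ) • (P - Q)) hnil (by rw [← hA]; exact hprod)
    apply hsub
    have h5 := congrArg (fun z => (2:ℂ)⁻¹ • z) hz
    simpa [smul_smul] using h5

/-- The Moore–Penrose inverse of a Banach space operator is unique when it exists. -/
theorem mpInv_unique {X Y : Type*}
    [NormedAddCommGroup X] [NormedSpace ℂ X] [CompleteSpace X]
    [NormedAddCommGroup Y] [NormedSpace ℂ Y] [CompleteSpace Y]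
    (T : X →L[ℂ] Y) (S₁ S₂ : Y →L[ℂ] X)
    (h₁ : IsMPInv T S₁) (h₂ : IsMPInv T S₂) : S₁ = S₂ := by
  obtain ⟨h1a, h1b, h1c, h1d⟩ := h₁
  obtain ⟨h2a, h2b, h2c, h2d⟩ := h₂
  -- relations among the projections S_i ∘ T on X
  have p11 : (S₁ ∘L T) * (S₁ ∘L T) = S₁ ∘L T := by
    rw [mul_def, comp_assoc, h1a]
  have p22 : (S₂ ∘L T) * (S₂ ∘L T) = S₂ ∘L T := by
    rw [mul_def, comp_assoc, h2a]
  have p12 : (S₁ ∘L T) * (S₂ ∘L T) = S₁ ∘L T := by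
    rw [mul_def, comp_assoc, h2a]
  have p21 : (S₂ ∘L T) * (S₁ ∘L T) = S₂ ∘L T := by
    rw [mul_def, comp_assoc, h1a]
  -- relations among the projections T ∘ S_i on Y
  have q11 : (T ∘L S₁) * (T ∘L S₁) = T ∘L S₁ := by
    rw [mul_def, comp_assoc, h1b]
  have q22 : (T ∘L S₂) * (T ∘L S₂) = T ∘L S₂ := by
    rw [mul_def, comp_assoc, h2b]
  have q12 : (T ∘L S₁) * (T ∘L S₂) = T ∘L S₂ := by
    rw [mul_def, ← comp_assoc, comp_assoc T S₁ T, h1a]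
  have q21 : (T ∘L S₂) * (T ∘L S₁) = T ∘L S₁ := by
    rw [mul_def, ← comp_assoc, comp_assoc T S₂ T, h2a]
  have hPQ : S₁ ∘L T = S₂ ∘L T :=
    herm_idem_core _ _ p11 p22 h1c h2c (Or.inr ⟨p12, p21⟩)
  have hRQ : T ∘L S₁ = T ∘L S₂ :=
    herm_idem_core _ _ q11 q22 h1d h2d (Or.inl ⟨q12, q21⟩)
  calc S₁ = S₁ ∘L (T ∘L S₁) := h1b.symm
    _ = S₁ ∘L (T ∘L S₂) := by rw [hRQ]
    _ = (S₁ ∘L T) ∘L S₂ := (comp_assoc _ _ _).symm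
    _ = (S₂ ∘L T) ∘L S₂ := by rw [hPQ]
    _ = S₂ ∘L (T ∘L S₂) := comp_assoc _ _ _
    _ = S₂ := h2b
end
end

section
/- Let X and Y be complex Banach spaces and T ∈ L(X,Y). Then T has a Moore-Penrose inverse S ∈ L(Y,X) if and only if there exist hermitian idempotents P ∈ L(X) and Q ∈ L(Y) such that N(P) = N(T) and R(Q) = R(T). -/
noncomputable section

open ContinuousLinearMap

/-- A Banach space operator has a Moore–Penrose inverse iff there are hermitian idempotents
`P`, `Q` with `N(P) = N(T)` and `R(Q) = R(T)`. -/
theorem mpInv_exists_iff {X Y : Type*}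
    [NormedAddCommGroup X] [NormedSpace ℂ X] [CompleteSpace X]
    [NormedAddCommGroup Y] [NormedSpace ℂ Y] [CompleteSpace Y]
    (T : X →L[ℂ] Y) :
    (∃ S : Y →L[ℂ] X, IsMPInv T S) ↔
      ∃ (P : X →L[ℂ] X) (Q : Y →L[ℂ] Y),
        IsIdempotentElem P ∧ IsHermitianOp P ∧
        IsIdempotentElem Q ∧ IsHermitianOp Q ∧
        LinearMap.ker (P : X →ₗ[ℂ] X) = LinearMap.ker (T : X →ₗ[ℂ] Y) ∧ LinearMap.range (Q : Y →ₗ[ℂ] Y) = LinearMap.range (T : X →ₗ[ℂ] Y) := by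
  constructor
  · rintro ⟨S, hTST, hSTS, hST, hTS⟩
    have h1 : ∀ x, T (S (T x)) = T x := fun x => by
      have := DFunLike.congr_fun hTST x; simpa using this
    have h2 : ∀ y, S (T (S y)) = S y := fun y => by
      have := DFunLike.congr_fun hSTS y; simpa using this
    refine ⟨S ∘L T, T ∘L S, ?_, hST, ?_, hTS, ?_, ?_⟩
    · show (S ∘L T) * (S ∘L T) = S ∘L T
      ext x
      simp [ContinuousLinearMap.mul_apply, h1 x]
    · show (T ∘L S) * (T ∘L S) = T ∘L S
      ext y
      simp [ContinuousLinearMap.mul_apply, h2 y]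
    · ext x
      constructor
      · intro hx
        simp only [LinearMap.mem_ker, ContinuousLinearMap.coe_coe, coe_comp', Function.comp_apply] at hx
        have : T (S (T x)) = T 0 := by rw [hx]
        simpa [h1 x] using this
      · intro hx
        simp only [LinearMap.mem_ker, ContinuousLinearMap.coe_coe] at hx ⊢
        simp [hx]
    · ext y
      constructor
      · rintro ⟨z, rfl⟩
        exact ⟨S z, rfl⟩
      · rintro ⟨x, rfl⟩
        exact ⟨T x, by simp [h1 x]⟩
  · rintro ⟨P, Q, hPidem, hPherm, hQidem, hQherm, hkerP, hranQ⟩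
    have hPP : ∀ x, P (P x) = P x := fun x => by
      have := DFunLike.congr_fun hPidem x
      simpa [ContinuousLinearMap.mul_apply] using this
    have hQQ : ∀ y, Q (Q y) = Q y := fun y => by
      have := DFunLike.congr_fun hQidem y
      simpa [ContinuousLinearMap.mul_apply] using this
    -- Q fixes its range, i.e. range T
    have hQfix : ∀ y, y ∈ LinearMap.range (T : X →ₗ[ℂ] Y) → Q y = y := by
      intro y hy
      rw [← hranQ] at hy
      obtain ⟨z, rfl⟩ := hy
      exact hQQ z
    -- T ∘ P = T
    have hTP : ∀ x, T (P x) = T x := by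
      intro x
      have hk : x - P x ∈ LinearMap.ker (P : X →ₗ[ℂ] X) := by
        simp [LinearMap.mem_ker, map_sub, hPP x]
      rw [hkerP] at hk
      have : T (x - P x) = 0 := hk
      rw [map_sub, sub_eq_zero] at this
      exact this.symm
    set K : Submodule ℂ X := LinearMap.ker (((1 : X →L[ℂ] X) - P : X →L[ℂ] X) : X →ₗ[ℂ] X) with hK
    set L : Submodule ℂ Y := LinearMap.ker (((1 : Y →L[ℂ] Y) - Q : Y →L[ℂ] Y) : Y →ₗ[ℂ] Y) with hL
    have hmemK : ∀ x : X, x ∈ K ↔ P x = x := by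
      intro x
      rw [hK, LinearMap.mem_ker]
      simp only [ContinuousLinearMap.coe_coe, ContinuousLinearMap.sub_apply, ContinuousLinearMap.one_apply]
      rw [sub_eq_zero, eq_comm]
    have hmemL : ∀ y : Y, y ∈ L ↔ Q y = y := by
      intro y
      rw [hL, LinearMap.mem_ker]
      simp only [ContinuousLinearMap.coe_coe, ContinuousLinearMap.sub_apply, ContinuousLinearMap.one_apply]
      rw [sub_eq_zero, eq_comm]
    haveI : CompleteSpace K :=
      (ContinuousLinearMap.isClosed_ker _).completeSpace_coe
    haveI : CompleteSpace L :=
      (ContinuousLinearMap.isClosed_ker _).completeSpace_coe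
    -- T restricted to K, corestricted to L
    have hmaps : ∀ x : K, T (x : X) ∈ L := by
      intro x
      rw [hmemL]
      exact hQfix _ ⟨x, rfl⟩
    set T₀ : K →L[ℂ] L :=
      ContinuousLinearMap.codRestrict (T ∘L K.subtypeL) L (fun x => hmaps x) with hT₀
    have hT₀apply : ∀ x : K, (T₀ x : Y) = T (x : X) := fun x => rfl
    have hinj : LinearMap.ker (T₀ : K →ₗ[ℂ] L) = ⊥ := by
      rw [LinearMap.ker_eq_bot']
      intro ⟨x, hx⟩ hTx
      have h0 : T x = 0 := congrArg Subtype.val hTx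
      have hmem : x ∈ LinearMap.ker (T : X →ₗ[ℂ] Y) := h0
      rw [← hkerP] at hmem
      have hPx0 : P x = 0 := hmem
      have hPxx : P x = x := (hmemK x).mp hx
      apply Subtype.ext
      show x = 0
      rw [← hPxx]
      exact hPx0
    have hsurj : LinearMap.range (T₀ : K →ₗ[ℂ] L) = ⊤ := by
      rw [LinearMap.range_eq_top]
      rintro ⟨y, hy⟩
      have hQy : Q y = y := (hmemL y).mp hy
      have hyT : y ∈ LinearMap.range (T : X →ₗ[ℂ] Y) := by
        rw [← hranQ]; exact ⟨y, hQy⟩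
      obtain ⟨x, rfl⟩ := hyT
      refine ⟨⟨P x, (hmemK _).mpr (hPP x)⟩, ?_⟩
      ext
      simpa [hT₀apply] using hTP x
    set e : K ≃L[ℂ] L := ContinuousLinearEquiv.ofBijective T₀ hinj hsurj with he
    have heapply : ∀ x : K, (e x : Y) = T (x : X) := fun x => rfl
    set Qr : Y →L[ℂ] L :=
      ContinuousLinearMap.codRestrict Q L (fun y => (hmemL _).mpr (hQQ y)) with hQr
    set S : Y →L[ℂ] X := K.subtypeL ∘L ((e.symm : L →L[ℂ] K) ∘L Qr) with hS
    have hSapply : ∀ y : Y, S y = (e.symm (Qr y) : X) := fun y => rfl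
    -- key computations
    have key2 : ∀ y, T (S y) = Q y := by
      intro y
      have : (e (e.symm (Qr y)) : Y) = (Qr y : Y) := by
        rw [e.apply_symm_apply]
      rw [hSapply, ← heapply]
      exact this
    have key1 : ∀ x, S (T x) = P x := by
      intro x
      have hQTx : Qr (T x) = e ⟨P x, (hmemK _).mpr (hPP x)⟩ := by
        ext
        show Q (T x) = T (P x)
        rw [hQfix (T x) ⟨x, rfl⟩, hTP]
      rw [hSapply, hQTx, e.symm_apply_apply]
    have hSinK : ∀ y, P (S y) = S y := by
      intro y
      rw [hSapply]
      exact (hmemK _).mp (e.symm (Qr y)).2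
    refine ⟨S, ?_, ?_, ?_, ?_⟩
    · ext x
      simp only [coe_comp', Function.comp_apply]
      rw [key1, hTP]
    · ext y
      simp only [coe_comp', Function.comp_apply]
      rw [key2]
      calc S (Q y) = S (T (S y)) := by rw [key2]
        _ = P (S y) := key1 _
        _ = S y := hSinK y
    · have : S ∘L T = P := by ext x; exact key1 x
      rw [this]; exact hPherm
    · have : T ∘L S = Q := by ext y; exact key2 y
      rw [this]; exact hQherm
end
end

section
/- Let X and Y be complex Banach spaces and T ∈ L(X,Y), and suppose S ∈ L(Y,X) is a Moore-Penrose inverse of T. Then the adjoint (dual) operator T* ∈ L(Y*,X*) has a Moore-Penrose inverse, namely S* ∈ L(X*,Y*): T* S* T* = T*, S* T* S* = S*, and S* T* ∈ L(Y*) and T* S* ∈ L(X*) are hermitian; thus (T*)† = (T†)*. -/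
noncomputable section

open ContinuousLinearMap

/-- The adjoint (dual) map of `T : X →L[ℂ] Y`, sending `g : Y* ` to `g ∘ T : X*`. -/
def dualOp {X Y : Type*} [NormedAddCommGroup X] [NormedSpace ℂ X]
    [NormedAddCommGroup Y] [NormedSpace ℂ Y] (T : X →L[ℂ] Y) :
    StrongDual ℂ Y →L[ℂ] StrongDual ℂ X :=
  (ContinuousLinearMap.compL ℂ X Y ℂ).flip T

section aux

variable {X Y Z : Type*} [NormedAddCommGroup X] [NormedSpace ℂ X]
    [NormedAddCommGroup Y] [NormedSpace ℂ Y] [NormedAddCommGroup Z] [NormedSpace ℂ Z]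

instance : IsTopologicalRing (StrongDual ℂ X →L[ℂ] StrongDual ℂ X) :=
  @NonUnitalSeminormedRing.toIsTopologicalRing (StrongDual ℂ X →L[ℂ] StrongDual ℂ X) _

lemma dualOp_comp (A : Y →L[ℂ] Z) (B : X →L[ℂ] Y) :
    dualOp (A ∘L B) = dualOp B ∘L dualOp A := rfl

set_option synthInstance.maxHeartbeats 400000 in
lemma dualOp_pow (A : X →L[ℂ] X) (n : ℕ) : dualOp (A ^ n) = (dualOp A) ^ n := by
  induction n with
  | zero => rfl
  | succ n ih =>
      rw [pow_succ, pow_succ', ContinuousLinearMap.mul_def, dualOp_comp, ih,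
        ← ContinuousLinearMap.mul_def]

lemma dualOp_exp [CompleteSpace X] (A : X →L[ℂ] X) :
    dualOp (NormedSpace.exp A) = NormedSpace.exp (dualOp A) := by
  have hsum : Summable fun n : ℕ => (((Nat.factorial n : ℂ))⁻¹) • A ^ n :=
    NormedSpace.expSeries_summable' A
  rw [NormedSpace.exp_eq_tsum ℂ, NormedSpace.exp_eq_tsum ℂ]
  have : dualOp (∑' n : ℕ, (((Nat.factorial n : ℂ))⁻¹) • A ^ n)
      = ∑' n : ℕ, dualOp ((((Nat.factorial n : ℂ))⁻¹) • A ^ n) :=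
    ((ContinuousLinearMap.compL ℂ X X ℂ).flip.map_tsum hsum)
  rw [this]
  refine tsum_congr fun n => ?_
  rw [show dualOp ((((Nat.factorial n : ℂ))⁻¹) • A ^ n)
      = (((Nat.factorial n : ℂ))⁻¹) • dualOp (A ^ n) from
    map_smul ((ContinuousLinearMap.compL ℂ X X ℂ).flip) _ _, dualOp_pow]

lemma norm_dualOp (A : X →L[ℂ] Y) : ‖dualOp A‖ = ‖A‖ := by
  apply le_antisymm
  · apply ContinuousLinearMap.opNorm_le_bound _ (norm_nonneg A)
    intro g
    apply ContinuousLinearMap.opNorm_le_bound _ (by positivity)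
    intro x
    calc ‖g (A x)‖ ≤ ‖g‖ * ‖A x‖ := g.le_opNorm _
      _ ≤ ‖g‖ * (‖A‖ * ‖x‖) := by
          exact mul_le_mul_of_nonneg_left (A.le_opNorm x) (norm_nonneg g)
      _ = ‖A‖ * ‖g‖ * ‖x‖ := by ring
  · apply ContinuousLinearMap.opNorm_le_bound _ (norm_nonneg (dualOp A))
    intro x
    apply NormedSpace.norm_le_dual_bound ℂ (A x) (by positivity)
    intro f
    calc ‖f (A x)‖ = ‖(dualOp A f) x‖ := rfl
      _ ≤ ‖dualOp A f‖ * ‖x‖ := (dualOp A f).le_opNorm x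
      _ ≤ ‖dualOp A‖ * ‖f‖ * ‖x‖ :=
          mul_le_mul_of_nonneg_right ((dualOp A).le_opNorm f) (norm_nonneg x)
      _ = ‖dualOp A‖ * ‖x‖ * ‖f‖ := by ring

lemma isHermitianOp_dualOp [CompleteSpace X] {H : X →L[ℂ] X} (hH : IsHermitianOp H) :
    IsHermitianOp (dualOp H) := by
  intro t
  have : (Complex.I * (t : ℂ)) • dualOp H = dualOp ((Complex.I * (t : ℂ)) • H) := by
    show _ = ((ContinuousLinearMap.compL ℂ X X ℂ).flip) _
    rw [map_smul]; rfl
  rw [this, ← dualOp_exp, norm_dualOp]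
  exact hH t

end aux

/-- If `S` is the Moore–Penrose inverse of `T`, then `S*` is the Moore–Penrose inverse of
the adjoint `T*`; that is, `(T*)† = (T†)*`. -/
theorem mpInv_dualOp {X Y : Type*}
    [NormedAddCommGroup X] [NormedSpace ℂ X] [CompleteSpace X]
    [NormedAddCommGroup Y] [NormedSpace ℂ Y] [CompleteSpace Y]
    (T : X →L[ℂ] Y) (S : Y →L[ℂ] X) (h : IsMPInv T S) :
    IsMPInv (dualOp T) (dualOp S) := by
  obtain ⟨h1, h2, h3, h4⟩ := h
  refine ⟨?_, ?_, ?_, ?_⟩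
  · rw [← dualOp_comp, ← dualOp_comp, ContinuousLinearMap.comp_assoc, h1]
  · rw [← dualOp_comp, ← dualOp_comp, ContinuousLinearMap.comp_assoc, h2]
  · rw [← dualOp_comp]
    exact isHermitianOp_dualOp h4
  · rw [← dualOp_comp]
    exact isHermitianOp_dualOp h3
end
end

section
/- Let X and Y be complex Banach spaces, T ∈ L(X), C ∈ L(X,Y) surjective, B ∈ L(Y,X) injective, with T = BC, suppose T has a Moore-Penrose inverse T†, and let B† and C† denote the Moore-Penrose inverses of B and C. Then the following statements are equivalent: (i) T is EP; (ii) BB† = C†C; (iii) N(B†) = N(C); (iv) R(B) = R(C†). -/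
noncomputable section

open ContinuousLinearMap

namespace EPAux

variable {X : Type*} [NormedAddCommGroup X] [NormedSpace ℂ X] [CompleteSpace X]

/-- Exponential of a scalar multiple of an idempotent. -/
lemma exp_smul_idem (P : X →L[ℂ] X) (hP : P * P = P) (a : ℂ) :
    NormedSpace.exp (a • P) = 1 + (Complex.exp a - 1) • P := by
  have hpow : ∀ n : ℕ, P ^ (n + 1) = P := by
    intro n
    induction n with
    | zero => simp
    | succ n ih => rw [pow_succ, ih, hP]
  have hsummX : Summable fun n : ℕ => ((n.factorial : ℂ))⁻¹ • (a • P) ^ n :=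
    NormedSpace.expSeries_summable' (𝕂 := ℂ) (a • P)
  have hsummC : Summable fun n : ℕ => ((n.factorial : ℂ))⁻¹ • a ^ n :=
    NormedSpace.expSeries_summable' (𝕂 := ℂ) a
  have hsummC' : Summable fun n : ℕ => (((n + 1).factorial : ℂ))⁻¹ * a ^ (n + 1) := by
    have := (summable_nat_add_iff (f := fun n : ℕ => ((n.factorial : ℂ))⁻¹ • a ^ n) 1).mpr hsummC
    simpa [smul_eq_mul] using this
  have hexpa : Complex.exp a - 1 = ∑' n : ℕ, (((n + 1).factorial : ℂ))⁻¹ * a ^ (n + 1) := by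
    have h0 : Complex.exp a = ∑' n : ℕ, ((n.factorial : ℂ))⁻¹ • a ^ n := by
      rw [Complex.exp_eq_exp_ℂ, NormedSpace.exp_eq_tsum (𝕂 := ℂ)]
    rw [h0, Summable.tsum_eq_zero_add hsummC]
    simp [smul_eq_mul]
  rw [NormedSpace.exp_eq_tsum (𝕂 := ℂ)]
  show (∑' n : ℕ, ((n.factorial : ℂ))⁻¹ • (a • P) ^ n) = _
  rw [Summable.tsum_eq_zero_add hsummX]
  have hterm : (fun n : ℕ => (((n + 1).factorial : ℂ))⁻¹ • (a • P) ^ (n + 1))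
      = fun n : ℕ => ((((n + 1).factorial : ℂ))⁻¹ * a ^ (n + 1)) • P := by
    funext n
    rw [smul_pow, hpow, smul_smul]
  rw [hterm, Summable.tsum_smul_const hsummC', ← hexpa]
  simp

/-- A square-zero operator `D` with `‖1 + 2 • D‖ ≤ 1` is zero. -/
lemma eq_zero_of_sq_zero (D : X →L[ℂ] X) (hD : D * D = 0)
    (h : ‖(1 : X →L[ℂ] X) + (2 : ℂ) • D‖ ≤ 1) : D = 0 := by
  set d : X →L[ℂ] X := (2 : ℂ) • D with hd_def
  have hd : d * d = 0 := by
    rw [hd_def, smul_mul_assoc, mul_smul_comm, hD, smul_zero, smul_zero]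
  have key : ∀ n : ℕ, ((1 : X →L[ℂ] X) + d) ^ n = 1 + (n : ℂ) • d := by
    intro n
    induction n with
    | zero => simp
    | succ n ih =>
      rw [pow_succ, ih, add_mul, one_mul, smul_mul_assoc, mul_add, mul_one, hd, add_zero]
      push_cast
      module
  have hbound : ∀ n : ℕ, (n : ℝ) * ‖d‖ ≤ 2 := by
    intro n
    rcases Nat.eq_zero_or_pos n with h0 | hpos
    · simp [h0]
    have h1 : ‖((1 : X →L[ℂ] X) + d) ^ n‖ ≤ 1 := by
      calc ‖((1 : X →L[ℂ] X) + d) ^ n‖ ≤ ‖(1 : X →L[ℂ] X) + d‖ ^ n := norm_pow_le' _ hpos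
        _ ≤ 1 ^ n := pow_le_pow_left₀ (norm_nonneg _) h n
        _ = 1 := one_pow n
    have h2 : ‖(n : ℂ) • d‖ ≤ 2 := by
      have : (n : ℂ) • d = ((1 : X →L[ℂ] X) + d) ^ n - 1 := by rw [key n]; abel
      rw [this]
      have hone : ‖(1 : X →L[ℂ] X)‖ ≤ 1 := by
        rw [ContinuousLinearMap.one_def]; exact ContinuousLinearMap.norm_id_le
      calc ‖((1 : X →L[ℂ] X) + d) ^ n - 1‖ ≤ ‖((1 : X →L[ℂ] X) + d) ^ n‖ + ‖(1 : X →L[ℂ] X)‖ :=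
            norm_sub_le _ _
        _ ≤ 1 + 1 := add_le_add h1 hone
        _ = 2 := by norm_num
    rw [norm_smul (n : ℂ) d] at h2
    simpa using h2
  have hzero : ‖d‖ = 0 := by
    by_contra hne
    have hpos : 0 < ‖d‖ := lt_of_le_of_ne (norm_nonneg _) (Ne.symm hne)
    obtain ⟨n, hn⟩ := exists_nat_gt (2 / ‖d‖)
    have := hbound n
    have : (n : ℝ) ≤ 2 / ‖d‖ := (le_div_iff₀ hpos).mpr this
    linarith
  have : d = 0 := norm_eq_zero.mp hzero
  have h2 : (2 : ℂ) • D = 0 := this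
  simpa using smul_eq_zero.mp h2

lemma norm_one_sub_two_smul (P : X →L[ℂ] X) (hP : IsHermitianOp P) (hP2 : P * P = P) :
    ‖(1 : X →L[ℂ] X) - (2 : ℂ) • P‖ = 1 := by
  have h := hP Real.pi
  rw [exp_smul_idem P hP2, mul_comm Complex.I _, Complex.exp_pi_mul_I] at h
  rw [show ((-1 : ℂ) - 1) = -2 by norm_num, neg_smul, ← sub_eq_add_neg] at h
  exact h

/-- Hermitian idempotents with the same kernel (expressed by the product identities
`P * Q = P` and `Q * P = Q`) are equal. -/
lemma herm_idem_eq_ker (P Q : X →L[ℂ] X) (hP : IsHermitianOp P) (hQ : IsHermitianOp Q)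
    (hP2 : P * P = P) (hQ2 : Q * Q = Q) (h1 : P * Q = P) (h2 : Q * P = Q) : P = Q := by
  have hD : (P - Q) * (P - Q) = 0 := by
    rw [sub_mul, mul_sub, mul_sub, hP2, hQ2, h1, h2]
    abel
  have expand : ∀ p q : X →L[ℂ] X, (1 - p) * (1 - q) = 1 - q - p + p * q := by
    intro p q; noncomm_ring
  have hPQ4 : ((2 : ℂ) • P) * ((2 : ℂ) • Q) = (4 : ℂ) • P := by
    rw [smul_mul_assoc, mul_smul_comm, h1, smul_smul]
    norm_num
  have hprod : ((1 : X →L[ℂ] X) - (2 : ℂ) • P) * (1 - (2 : ℂ) • Q)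
      = 1 + (2 : ℂ) • (P - Q) := by
    rw [expand, hPQ4]
    module
  have hnorm : ‖(1 : X →L[ℂ] X) + (2 : ℂ) • (P - Q)‖ ≤ 1 := by
    rw [← hprod]
    calc ‖((1 : X →L[ℂ] X) - (2 : ℂ) • P) * (1 - (2 : ℂ) • Q)‖
        ≤ ‖(1 : X →L[ℂ] X) - (2 : ℂ) • P‖ * ‖(1 : X →L[ℂ] X) - (2 : ℂ) • Q‖ := norm_mul_le _ _
      _ = 1 := by rw [norm_one_sub_two_smul P hP hP2, norm_one_sub_two_smul Q hQ hQ2, one_mul]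
  have := eq_zero_of_sq_zero (P - Q) hD hnorm
  exact sub_eq_zero.mp this

/-- Hermitian idempotents with the same range (expressed by the product identities
`P * Q = Q` and `Q * P = P`) are equal. -/
lemma herm_idem_eq_range (P Q : X →L[ℂ] X) (hP : IsHermitianOp P) (hQ : IsHermitianOp Q)
    (hP2 : P * P = P) (hQ2 : Q * Q = Q) (h1 : P * Q = Q) (h2 : Q * P = P) : P = Q := by
  have hD : (Q - P) * (Q - P) = 0 := by
    rw [sub_mul, mul_sub, mul_sub, hP2, hQ2, h1, h2]
    abel
  have expand : ∀ p q : X →L[ℂ] X, (1 - p) * (1 - q) = 1 - q - p + p * q := by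
    intro p q; noncomm_ring
  have hPQ4 : ((2 : ℂ) • P) * ((2 : ℂ) • Q) = (4 : ℂ) • Q := by
    rw [smul_mul_assoc, mul_smul_comm, h1, smul_smul]
    norm_num
  have hprod : ((1 : X →L[ℂ] X) - (2 : ℂ) • P) * (1 - (2 : ℂ) • Q)
      = 1 + (2 : ℂ) • (Q - P) := by
    rw [expand, hPQ4]
    module
  have hnorm : ‖(1 : X →L[ℂ] X) + (2 : ℂ) • (Q - P)‖ ≤ 1 := by
    rw [← hprod]
    calc ‖((1 : X →L[ℂ] X) - (2 : ℂ) • P) * (1 - (2 : ℂ) • Q)‖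
        ≤ ‖(1 : X →L[ℂ] X) - (2 : ℂ) • P‖ * ‖(1 : X →L[ℂ] X) - (2 : ℂ) • Q‖ := norm_mul_le _ _
      _ = 1 := by rw [norm_one_sub_two_smul P hP hP2, norm_one_sub_two_smul Q hQ hQ2, one_mul]
  have := eq_zero_of_sq_zero (Q - P) hD hnorm
  exact (sub_eq_zero.mp this).symm

/-- If every fixed point of an idempotent `E` is fixed by `P`, then `P * E = E`. -/
lemma comp_eq_of_fix (P E : X →L[ℂ] X) (hE2 : E * E = E)
    (h : ∀ z, E z = z → P z = z) : P * E = E := by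
  ext z
  have hfix : E (E z) = E z := by
    conv_lhs => rw [← ContinuousLinearMap.mul_apply, hE2]
  exact h (E z) hfix

/-- If the kernel of an idempotent `F` is contained in the kernel of `Q`, then `Q * F = Q`. -/
lemma comp_eq_of_ker (Q F : X →L[ℂ] X) (hF2 : F * F = F)
    (h : ∀ z, F z = 0 → Q z = 0) : Q * F = Q := by
  ext z
  have h1 : F (F z - z) = 0 := by
    rw [map_sub]
    have : F (F z) = F z := by
      conv_lhs => rw [← ContinuousLinearMap.mul_apply, hF2]
    rw [this, sub_self]
  have h2 := h _ h1
  rw [map_sub, sub_eq_zero] at h2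
  exact h2

end EPAux

open EPAux

/-- For `T = BC` with `C` surjective, `B` injective, and Moore–Penrose inverses `T†`, `B†`,
`C†`: `T` is EP iff `BB† = C†C` iff `N(B†) = N(C)` iff `R(B) = R(C†)`. -/
theorem ep_tfae_of_factorization {X Y : Type*}
    [NormedAddCommGroup X] [NormedSpace ℂ X] [CompleteSpace X]
    [NormedAddCommGroup Y] [NormedSpace ℂ Y] [CompleteSpace Y]
    (T : X →L[ℂ] X) (C : X →L[ℂ] Y) (B : Y →L[ℂ] X)
    (hC : Function.Surjective C) (hB : Function.Injective B) (hT : T = B ∘L C)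
    (Td : X →L[ℂ] X) (Bd : X →L[ℂ] Y) (Cd : Y →L[ℂ] X)
    (hTd : IsMPInv T Td) (hBd : IsMPInv B Bd) (hCd : IsMPInv C Cd) :
    List.TFAE
      [T ∘L Td = Td ∘L T,
       B ∘L Bd = Cd ∘L C,
       LinearMap.ker (Bd : X →ₗ[ℂ] Y) = LinearMap.ker (C : X →ₗ[ℂ] Y),
       LinearMap.range (B : Y →ₗ[ℂ] X) = LinearMap.range (Cd : Y →ₗ[ℂ] X)] := by
  obtain ⟨hT1, hT2, hTF, hTE⟩ := hTd
  obtain ⟨hB1, hB2, hBF, hBP⟩ := hBd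
  obtain ⟨hC1, hC2, hCQ, hCE⟩ := hCd
  -- pointwise identities
  have hBdB : ∀ y : Y, Bd (B y) = y := by
    intro y
    apply hB
    have := congrArg (fun f : Y →L[ℂ] X => f y) hB1
    simpa using this
  have hCCd : ∀ y : Y, C (Cd y) = y := by
    intro y
    obtain ⟨x, rfl⟩ := hC y
    have := congrArg (fun f : X →L[ℂ] Y => f x) hC1
    simpa using this
  have hTTdT : ∀ x : X, T (Td (T x)) = T x := by
    intro x
    have := congrArg (fun f : X →L[ℂ] X => f x) hT1
    simpa using this
  have hTdTTd : ∀ x : X, Td (T (Td x)) = Td x := by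
    intro x
    have := congrArg (fun f : X →L[ℂ] X => f x) hT2
    simpa using this
  -- the four hermitian idempotents, as products
  set P : X →L[ℂ] X := B ∘L Bd with hP_def
  set Q : X →L[ℂ] X := Cd ∘L C with hQ_def
  set E : X →L[ℂ] X := T ∘L Td with hE_def
  set F : X →L[ℂ] X := Td ∘L T with hF_def
  have hPapp : ∀ x, P x = B (Bd x) := fun x => rfl
  have hQapp : ∀ x, Q x = Cd (C x) := fun x => rfl
  have hEapp : ∀ x, E x = T (Td x) := fun x => rfl
  have hFapp : ∀ x, F x = Td (T x) := fun x => rfl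
  have hP2 : P * P = P := by
    ext x; simp only [ContinuousLinearMap.mul_apply, hPapp, hBdB]
  have hQ2 : Q * Q = Q := by
    ext x; simp only [ContinuousLinearMap.mul_apply, hQapp, hCCd]
  have hE2 : E * E = E := by
    ext x; simp only [ContinuousLinearMap.mul_apply, hEapp]
    rw [hTdTTd]
  have hF2 : F * F = F := by
    ext x; simp only [ContinuousLinearMap.mul_apply, hFapp]
    rw [hTTdT]
  -- kernel and fixed-point descriptions
  have kerP : ∀ x, P x = 0 ↔ Bd x = 0 := by
    intro x
    constructor
    · intro h
      have : Bd (P x) = Bd x := by rw [hPapp, hBdB]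
      rw [h, map_zero] at this
      exact this.symm
    · intro h; rw [hPapp, h, map_zero]
  have kerQ : ∀ x, Q x = 0 ↔ C x = 0 := by
    intro x
    constructor
    · intro h
      have : C (Q x) = C x := by rw [hQapp, hCCd]
      rw [h, map_zero] at this
      exact this.symm
    · intro h; rw [hQapp, h, map_zero]
  have kerT : ∀ x, T x = 0 ↔ C x = 0 := by
    intro x
    constructor
    · intro h
      apply hB
      rw [map_zero, ← h, hT]; rfl
    · intro h
      rw [hT]
      show B (C x) = 0
      rw [h, map_zero]
  have kerF : ∀ x, F x = 0 ↔ C x = 0 := by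
    intro x
    constructor
    · intro h
      rw [← kerT]
      have : T (F x) = T x := by rw [hFapp, hTTdT]
      rw [h, map_zero] at this
      exact this.symm
    · intro h
      rw [hFapp, ← kerT x] at *
      rw [h, map_zero]
  have fixP : ∀ x, P x = x ↔ x ∈ Set.range B := by
    intro x
    constructor
    · intro h; exact ⟨Bd x, h⟩
    · rintro ⟨y, rfl⟩; rw [hPapp, hBdB]
  have fixQ : ∀ x, Q x = x ↔ x ∈ Set.range Cd := by
    intro x
    constructor
    · intro h; exact ⟨C x, h⟩
    · rintro ⟨y, rfl⟩; rw [hQapp, hCCd]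
  have fixE : ∀ x, E x = x ↔ x ∈ Set.range B := by
    intro x
    constructor
    · intro h
      refine ⟨C (Td x), ?_⟩
      have : B (C (Td x)) = T (Td x) := by rw [hT]; rfl
      rw [this, ← hEapp, h]
    · rintro ⟨y, rfl⟩
      obtain ⟨w, rfl⟩ := hC y
      have hBw : B (C w) = T w := by rw [hT]; rfl
      rw [hBw, hEapp, hTTdT]
  -- unconditional: P = E and Q = F
  have hPE : P = E := by
    apply herm_idem_eq_range P E hBP hTE hP2 hE2
    · exact comp_eq_of_fix P E hE2 (fun z hz => (fixP z).mpr ((fixE z).mp hz))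
    · exact comp_eq_of_fix E P hP2 (fun z hz => (fixE z).mpr ((fixP z).mp hz))
  have hQF : Q = F := by
    apply herm_idem_eq_ker Q F hCQ hTF hQ2 hF2
    · exact comp_eq_of_ker Q F hF2 (fun z hz => (kerQ z).mpr ((kerF z).mp hz))
    · exact comp_eq_of_ker F Q hQ2 (fun z hz => (kerF z).mpr ((kerQ z).mp hz))
  tfae_have 1 → 2
  | h => by
    show P = Q
    rw [hPE, hQF]
    exact h
  tfae_have 2 → 3
  | h => by
    have hPQ : P = Q := h
    ext x
    simp only [LinearMap.mem_ker, ContinuousLinearMap.coe_coe]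
    rw [← kerP, ← kerQ, hPQ]
  tfae_have 3 → 4
  | h => by
    have hker : ∀ x, P x = 0 ↔ Q x = 0 := by
      intro x
      rw [kerP, kerQ]
      constructor
      · intro hx
        have : x ∈ LinearMap.ker (Bd : X →ₗ[ℂ] Y) := hx
        rw [h] at this
        exact this
      · intro hx
        have : x ∈ LinearMap.ker (C : X →ₗ[ℂ] Y) := hx
        rw [← h] at this
        exact this
    have hPQ : P = Q := by
      apply herm_idem_eq_ker P Q hBP hCQ hP2 hQ2
      · exact comp_eq_of_ker P Q hQ2 (fun z hz => (hker z).mpr hz)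
      · exact comp_eq_of_ker Q P hP2 (fun z hz => (hker z).mp hz)
    ext x
    simp only [LinearMap.mem_range, ContinuousLinearMap.coe_coe]
    constructor
    · rintro ⟨y, rfl⟩
      have : P (B y) = B y := (fixP (B y)).mpr ⟨y, rfl⟩
      rw [hPQ] at this
      obtain ⟨z, hz⟩ := (fixQ (B y)).mp this
      exact ⟨z, hz⟩
    · rintro ⟨y, rfl⟩
      have : Q (Cd y) = Cd y := (fixQ (Cd y)).mpr ⟨y, rfl⟩
      rw [← hPQ] at this
      obtain ⟨z, hz⟩ := (fixP (Cd y)).mp this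
      exact ⟨z, hz⟩
  tfae_have 4 → 1
  | h => by
    have hfix : ∀ x, P x = x ↔ Q x = x := by
      intro x
      rw [fixP, fixQ]
      constructor
      · intro hx
        obtain ⟨y, hy⟩ := hx
        have : x ∈ LinearMap.range (B : Y →ₗ[ℂ] X) := ⟨y, hy⟩
        rw [h] at this
        obtain ⟨z, hz⟩ := this
        exact ⟨z, hz⟩
      · intro hx
        obtain ⟨y, hy⟩ := hx
        have : x ∈ LinearMap.range (Cd : Y →ₗ[ℂ] X) := ⟨y, hy⟩
        rw [← h] at this
        obtain ⟨z, hz⟩ := this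
        exact ⟨z, hz⟩
    have hPQ : P = Q := by
      apply herm_idem_eq_range P Q hBP hCQ hP2 hQ2
      · exact comp_eq_of_fix P Q hQ2 (fun z hz => (hfix z).mpr hz)
      · exact comp_eq_of_fix Q P hP2 (fun z hz => (hfix z).mp hz)
    show E = F
    rw [← hPE, ← hQF]
    exact hPQ
  tfae_finish
end
end

section
/- Let X and Y be complex Banach spaces, T ∈ L(X), C ∈ L(X,Y) surjective, B ∈ L(Y,X) injective, with T = BC, suppose T has a Moore-Penrose inverse T†, and let B† and C† denote the Moore-Penrose inverses of B and C. Then the following statements are equivalent: (i) T is EP; (ii) there exists a bijective U ∈ L(Y) such that C = UB†; (iii) there exists an injective U₁ ∈ L(Y) such that C = U₁B†; (iv) there exist U₂, U₃ ∈ L(Y) such that C = U₂B† and B† = U₃C; (v) there exists an injective S₁ ∈ L(Y) such that B† = S₁C. -/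
noncomputable section

open ContinuousLinearMap Nat

set_option maxHeartbeats 1000000
set_option linter.unusedSectionVars false

section AuxLemmas

variable {X : Type*} [NormedAddCommGroup X] [NormedSpace ℂ X] [CompleteSpace X]

lemma pow_of_idem (P : X →L[ℂ] X) (h : P * P = P) : ∀ n : ℕ, P ^ (n + 1) = P := by
  intro n
  induction n with
  | zero => simp
  | succ n ih => rw [pow_succ, ih, h]

lemma exp_idem (P : X →L[ℂ] X) (h : P * P = P) (c : ℂ) :
    NormedSpace.exp (c • P) = 1 + (Complex.exp c - 1) • P := by
  have hsum : Summable (fun n : ℕ => ((n ! : ℂ))⁻¹ • (c • P) ^ n) :=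
    NormedSpace.expSeries_summable' (𝕂 := ℂ) (𝔸 := X →L[ℂ] X) (c • P)
  have hterm : ∀ n : ℕ, (((n + 1)! : ℂ))⁻¹ • (c • P) ^ (n + 1)
      = ((((n + 1)! : ℂ))⁻¹ * c ^ (n + 1)) • P := by
    intro n
    rw [smul_pow, pow_of_idem P h, smul_smul]
  have hc : Summable (fun n : ℕ => ((n ! : ℂ))⁻¹ * c ^ n) := by
    simpa [smul_eq_mul] using NormedSpace.expSeries_summable' (𝕂 := ℂ) c
  have hc1 : Summable (fun n : ℕ => (((n + 1)! : ℂ))⁻¹ * c ^ (n + 1)) :=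
    (summable_nat_add_iff 1).mpr hc
  have hexpc : Complex.exp c = 1 + ∑' n : ℕ, (((n + 1)! : ℂ))⁻¹ * c ^ (n + 1) := by
    have : Complex.exp c = ∑' n : ℕ, ((n ! : ℂ))⁻¹ * c ^ n := by
      rw [Complex.exp_eq_exp_ℂ, NormedSpace.exp_eq_tsum (𝕂 := ℂ)]
      simp [smul_eq_mul]
    rw [this, Summable.tsum_eq_zero_add hc]
    simp
  rw [NormedSpace.exp_eq_tsum (𝕂 := ℂ)]
  show (∑' n : ℕ, ((n ! : ℂ))⁻¹ • (c • P) ^ n) = _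
  rw [Summable.tsum_eq_zero_add hsum]
  simp only [hterm]
  rw [Summable.tsum_smul_const hc1]
  have h0 : ((0! : ℂ))⁻¹ • (c • P) ^ 0 = (1 : X →L[ℂ] X) := by simp
  rw [h0, hexpc]
  module

lemma norm_one_sub_double (P : X →L[ℂ] X) (hid : P * P = P) (hh : IsHermitianOp P) :
    ‖(1 : X →L[ℂ] X) - (P + P)‖ = 1 := by
  have h := hh Real.pi
  rw [exp_idem P hid] at h
  have hexp : Complex.exp (Complex.I * (Real.pi : ℂ)) = -1 := by
    rw [mul_comm]; exact Complex.exp_pi_mul_I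
  rw [hexp] at h
  have : (1 : X →L[ℂ] X) + (-1 - 1 : ℂ) • P = 1 - (P + P) := by module
  rwa [this] at h

lemma aux_core (A B H : X →L[ℂ] X) (hA : ‖A‖ ≤ 1) (hB : ‖B‖ ≤ 1)
    (hAB : A * B = 1 + H) (hH : H * H = 0) : H = 0 := by
  have hpow : ∀ n : ℕ, (1 + H) ^ n = 1 + n • H := by
    intro n
    induction n with
    | zero => simp
    | succ n ih =>
      rw [pow_succ, ih, mul_add, mul_one, add_mul, one_mul, smul_mul_assoc, hH,
        smul_zero, add_zero, succ_nsmul]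
      abel
  have hn : ∀ n : ℕ, ‖((1 + H : X →L[ℂ] X)) ^ n‖ ≤ 1 := by
    intro n
    rcases Nat.eq_zero_or_pos n with rfl | hn0
    · rw [pow_zero]; exact ContinuousLinearMap.norm_id_le
    rw [← hAB]
    calc ‖(A * B) ^ n‖ ≤ ‖A * B‖ ^ n := norm_pow_le' _ hn0
      _ ≤ 1 := by
        apply pow_le_one₀ (norm_nonneg _)
        calc ‖A * B‖ ≤ ‖A‖ * ‖B‖ := norm_mul_le _ _
          _ ≤ 1 := by nlinarith [norm_nonneg A, norm_nonneg B]
  have key : ∀ n : ℕ, (n : ℝ) * ‖H‖ ≤ 2 := by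
    intro n
    have h1 := hn n
    rw [hpow n] at h1
    have h2 : ‖n • H‖ ≤ ‖(1 : X →L[ℂ] X) + n • H‖ + ‖(1 : X →L[ℂ] X)‖ := by
      simpa using norm_sub_le ((1 : X →L[ℂ] X) + n • H) 1
    have h3 : ‖n • H‖ = (n : ℝ) * ‖H‖ := by
      rw [← Nat.cast_smul_eq_nsmul ℝ, norm_smul]
      simp
    have h4 : ‖(1 : X →L[ℂ] X)‖ ≤ 1 := ContinuousLinearMap.norm_id_le
    linarith
  by_contra hne
  have hpos : 0 < ‖H‖ := by
    rcases (norm_nonneg H).lt_or_eq with h | h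
    · exact h
    · exact absurd (norm_eq_zero.mp h.symm) hne
  obtain ⟨n, hn2⟩ := exists_nat_gt (2 / ‖H‖)
  have := key n
  have : (n : ℝ) ≤ 2 / ‖H‖ := (le_div_iff₀ hpos).mpr this
  linarith

/-- Hermitian idempotents with `PQ = P` and `QP = Q` coincide. -/
lemma herm_proj_eq_of_ker (P Q : X →L[ℂ] X) (hP : P * P = P) (hQ : Q * Q = Q)
    (hhP : IsHermitianOp P) (hhQ : IsHermitianOp Q)
    (h1 : P * Q = P) (h2 : Q * P = Q) : P = Q := by
  have hAB : ((1 : X →L[ℂ] X) - (P + P)) * (1 - (Q + Q)) = 1 + ((P + P) - (Q + Q)) := by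
    simp only [sub_mul, mul_sub, add_mul, mul_add, mul_one, one_mul, hP, hQ, h1, h2]
    abel
  have hHH : ((P + P) - (Q + Q)) * ((P + P) - (Q + Q)) = 0 := by
    simp only [sub_mul, mul_sub, add_mul, mul_add, hP, hQ, h1, h2]
    abel
  have hzero := aux_core _ _ _ (le_of_eq (norm_one_sub_double P hP hhP))
    (le_of_eq (norm_one_sub_double Q hQ hhQ)) hAB hHH
  have h2P : (2 : ℂ) • P = (2 : ℂ) • Q := by
    rw [two_smul, two_smul]
    exact sub_eq_zero.mp hzero
  exact smul_right_injective _ (two_ne_zero) h2P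

/-- Hermitian idempotents with `PQ = Q` and `QP = P` coincide. -/
lemma herm_proj_eq_of_ran (P Q : X →L[ℂ] X) (hP : P * P = P) (hQ : Q * Q = Q)
    (hhP : IsHermitianOp P) (hhQ : IsHermitianOp Q)
    (h1 : P * Q = Q) (h2 : Q * P = P) : P = Q := by
  have hAB : ((1 : X →L[ℂ] X) - (P + P)) * (1 - (Q + Q)) = 1 + ((Q + Q) - (P + P)) := by
    simp only [sub_mul, mul_sub, add_mul, mul_add, mul_one, one_mul, hP, hQ, h1, h2]
    abel
  have hHH : ((Q + Q) - (P + P)) * ((Q + Q) - (P + P)) = 0 := by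
    simp only [sub_mul, mul_sub, add_mul, mul_add, hP, hQ, h1, h2]
    abel
  have hzero := aux_core _ _ _ (le_of_eq (norm_one_sub_double P hP hhP))
    (le_of_eq (norm_one_sub_double Q hQ hhQ)) hAB hHH
  have h2P : (2 : ℂ) • Q = (2 : ℂ) • P := by
    rw [two_smul, two_smul]
    exact sub_eq_zero.mp hzero
  exact (smul_right_injective _ (two_ne_zero) h2P).symm


end AuxLemmas

/-- For `T = BC` with `C` surjective, `B` injective, and Moore–Penrose inverses `T†`, `B†`,
`C†`: `T` is EP iff `C = UB†` for a bijective `U`, iff `C = U₁B†` for an injective `U₁`,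
iff `C = U₂B†` and `B† = U₃C` for some `U₂, U₃`, iff `B† = S₁C` for an injective `S₁`. -/
theorem ep_tfae_left_factor {X Y : Type*}
    [NormedAddCommGroup X] [NormedSpace ℂ X] [CompleteSpace X]
    [NormedAddCommGroup Y] [NormedSpace ℂ Y] [CompleteSpace Y]
    (T : X →L[ℂ] X) (C : X →L[ℂ] Y) (B : Y →L[ℂ] X)
    (hC : Function.Surjective C) (hB : Function.Injective B) (hT : T = B ∘L C)
    (Td : X →L[ℂ] X) (Bd : X →L[ℂ] Y) (Cd : Y →L[ℂ] X)
    (hTd : IsMPInv T Td) (hBd : IsMPInv B Bd) (hCd : IsMPInv C Cd) :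
    List.TFAE
      [T ∘L Td = Td ∘L T,
       ∃ U : Y →L[ℂ] Y, Function.Bijective U ∧ C = U ∘L Bd,
       ∃ U₁ : Y →L[ℂ] Y, Function.Injective U₁ ∧ C = U₁ ∘L Bd,
       ∃ U₂ U₃ : Y →L[ℂ] Y, C = U₂ ∘L Bd ∧ Bd = U₃ ∘L C,
       ∃ S₁ : Y →L[ℂ] Y, Function.Injective S₁ ∧ Bd = S₁ ∘L C] := by
  -- pointwise consequences of the MP axioms
  have hr1 : ∀ y : Y, Bd (B y) = y := by
    intro y
    apply hB
    simpa using DFunLike.congr_fun hBd.1 y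
  have hr2 : ∀ x : X, C (Cd (C x)) = C x := by
    intro x
    simpa using DFunLike.congr_fun hCd.1 x
  have hr2' : ∀ y : Y, C (Cd y) = y := by
    intro y
    obtain ⟨x, rfl⟩ := hC y
    exact hr2 x
  have hTT : ∀ x : X, T (Td (T x)) = T x := by
    intro x
    simpa using DFunLike.congr_fun hTd.1 x
  have hTdT : ∀ x : X, Td (T (Td x)) = Td x := by
    intro x
    simpa using DFunLike.congr_fun hTd.2.1 x
  have hTx : ∀ x : X, T x = B (C x) := by
    intro x; rw [hT]; simp
  have hBT : ∀ y : Y, B y = T (Cd y) := by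
    intro y; rw [hTx, hr2']
  have hCT : ∀ x : X, C x = Bd (T x) := by
    intro x; rw [hTx, hr1]
  -- idempotents
  have hid1 : (B ∘L Bd) * (B ∘L Bd) = B ∘L Bd := by
    ext x; simp [ContinuousLinearMap.mul_apply, hr1]
  have hid2 : (T ∘L Td) * (T ∘L Td) = T ∘L Td := by
    ext x; simp [ContinuousLinearMap.mul_apply, hTT]
  have hid3 : (Cd ∘L C) * (Cd ∘L C) = Cd ∘L C := by
    ext x; simp [ContinuousLinearMap.mul_apply, hr2]
  have hid4 : (Td ∘L T) * (Td ∘L T) = Td ∘L T := by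
    ext x; simp [ContinuousLinearMap.mul_apply, hTdT]
  -- key identity 1 : B Bd = T Td
  have E1 : B ∘L Bd = T ∘L Td := by
    apply herm_proj_eq_of_ran _ _ hid1 hid2 hBd.2.2.2 hTd.2.2.2
    · ext x
      simp only [ContinuousLinearMap.mul_apply, ContinuousLinearMap.comp_apply]
      rw [hTx (Td x), hr1, ← hTx]
    · ext x
      simp only [ContinuousLinearMap.mul_apply, ContinuousLinearMap.comp_apply]
      rw [hBT (Bd x), hTT, ← hBT]
  -- key identity 2 : Cd C = Td T
  have E2 : Cd ∘L C = Td ∘L T := by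
    apply herm_proj_eq_of_ker _ _ hid3 hid4 hCd.2.2.1 hTd.2.2.1
    · ext x
      simp only [ContinuousLinearMap.mul_apply, ContinuousLinearMap.comp_apply]
      rw [hCT (Td (T x)), hTT, ← hCT]
    · ext x
      simp only [ContinuousLinearMap.mul_apply, ContinuousLinearMap.comp_apply]
      rw [← hBT (C x), ← hTx]
  -- equal kernels imply statement 1
  have hker_eq : (∀ x : X, C x = 0 ↔ Bd x = 0) → T ∘L Td = Td ∘L T := by
    intro hk
    have e1 : ∀ x : X, C (B (Bd x)) = C x := by
      intro x
      have hb : Bd (x - B (Bd x)) = 0 := by simp [map_sub, hr1]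
      have hcx : C (x - B (Bd x)) = 0 := (hk _).mpr hb
      rw [map_sub, sub_eq_zero] at hcx
      exact hcx.symm
    have e2 : ∀ x : X, Bd (Cd (C x)) = Bd x := by
      intro x
      have hc0 : C (x - Cd (C x)) = 0 := by simp [map_sub, hr2]
      have hbx := (hk _).mp hc0
      rw [map_sub, sub_eq_zero] at hbx
      exact hbx.symm
    have key : Cd ∘L C = B ∘L Bd := by
      apply herm_proj_eq_of_ker _ _ hid3 hid1 hCd.2.2.1 hBd.2.2.2
      · ext x
        simp only [ContinuousLinearMap.mul_apply, ContinuousLinearMap.comp_apply]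
        rw [e1]
      · ext x
        simp only [ContinuousLinearMap.mul_apply, ContinuousLinearMap.comp_apply]
        rw [e2]
    rw [← E1, ← E2, key]
  tfae_have 1 → 2 := by
    intro h1
    have hbc : ∀ x : X, B (Bd x) = Cd (C x) := by
      intro x
      have hBC : B ∘L Bd = Cd ∘L C := by rw [E1, h1, ← E2]
      simpa using DFunLike.congr_fun hBC x
    refine ⟨C ∘L B, ⟨?_, ?_⟩, ?_⟩
    · apply Function.LeftInverse.injective (g := fun y => Bd (Cd y))
      intro y
      simp only [ContinuousLinearMap.comp_apply]
      rw [← hbc (B y), hr1, hr1]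
    · apply Function.RightInverse.surjective (g := fun y => Bd (Cd y))
      intro y
      simp only [ContinuousLinearMap.comp_apply]
      rw [hbc (Cd y), hr2', hr2']
    · ext x
      simp only [ContinuousLinearMap.comp_apply]
      rw [hbc, hr2]
  tfae_have 2 → 3 := by
    rintro ⟨U, hU, hCU⟩
    exact ⟨U, hU.injective, hCU⟩
  tfae_have 3 → 1 := by
    rintro ⟨U₁, hU₁, hCU⟩
    apply hker_eq
    intro x
    constructor
    · intro h
      have : U₁ (Bd x) = U₁ 0 := by
        rw [map_zero]
        rw [hCU] at h
        simpa using h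
      exact hU₁ this
    · intro h
      rw [hCU]
      simp [h]
  tfae_have 1 → 4 := by
    intro h1
    have hbc : ∀ x : X, B (Bd x) = Cd (C x) := by
      intro x
      have hBC : B ∘L Bd = Cd ∘L C := by rw [E1, h1, ← E2]
      simpa using DFunLike.congr_fun hBC x
    refine ⟨C ∘L B, Bd ∘L Cd, ?_, ?_⟩
    · ext x
      simp only [ContinuousLinearMap.comp_apply]
      rw [hbc, hr2]
    · ext x
      simp only [ContinuousLinearMap.comp_apply]
      rw [← hbc, hr1]
  tfae_have 4 → 5 := by
    rintro ⟨U₂, U₃, hC2, hB3⟩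
    refine ⟨Bd ∘L Cd, ?_, ?_⟩
    · intro a b hab
      simp only [ContinuousLinearMap.comp_apply] at hab
      have : C (Cd a) = C (Cd b) := by
        rw [hC2]
        simp only [ContinuousLinearMap.comp_apply]
        rw [hab]
      rwa [hr2', hr2'] at this
    · ext x
      simp only [ContinuousLinearMap.comp_apply]
      conv_lhs => rw [hB3]
      rw [hB3]
      simp only [ContinuousLinearMap.comp_apply]
      rw [hr2]
  tfae_have 5 → 1 := by
    rintro ⟨S₁, hS₁, hBS⟩
    apply hker_eq
    intro x
    have hbs : Bd x = S₁ (C x) := by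
      rw [hBS]; simp
    constructor
    · intro h
      rw [hbs, h, map_zero]
    · intro h
      apply hS₁
      rw [← hbs, h, map_zero]
  tfae_finish
end
end

section
/- Let X and Y be complex Banach spaces, T ∈ L(X), C ∈ L(X,Y) surjective, B ∈ L(Y,X) injective, with T = BC, suppose T has a Moore-Penrose inverse T†, and let B† and C† denote the Moore-Penrose inverses of B and C. Then the following statements are equivalent: (i) T is EP; (ii) there exists a bijective W ∈ L(Y) such that B = C†W; (iii) there exists a surjective W₁ ∈ L(Y) such that B = C†W₁; (iv) there exist W₂, W₃ ∈ L(Y) such that B = C†W₂ and C† = BW₃; (v) there exist H₁, H₂ ∈ L(Y) such that B = C†H₂ and C = H₁B†; (vi) there exist K₁, K₂ ∈ L(Y) such that C† = BK₂ and B† = K₁C; (vii) there exists a surjective S₂ ∈ L(Y) such that C† = BS₂. -/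
noncomputable section

open ContinuousLinearMap

section AuxLemmas

set_option linter.unusedSectionVars false

variable {X : Type*} [NormedAddCommGroup X] [NormedSpace ℂ X] [CompleteSpace X]

lemma myPowIdem (P : X →L[ℂ] X) (hP : P * P = P) : ∀ n : ℕ, P ^ (n+1) = P := by
  intro n
  induction n with
  | zero => simp
  | succ k ih => rw [pow_succ, ih, hP]

lemma myExpIdem (P : X →L[ℂ] X) (hP : P * P = P) (c : ℂ) :
    NormedSpace.exp (c • P) = 1 + (Complex.exp c - 1) • P := by
  have hsum : Summable fun n : ℕ => (((n.factorial : ℂ))⁻¹ * c ^ n) • P ^ n := by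
    refine (NormedSpace.expSeries_summable' (𝕂 := ℂ) (c • P)).congr fun n => ?_
    rw [smul_pow, smul_smul]
  have hsumc : Summable fun n : ℕ => ((n.factorial : ℂ))⁻¹ * c ^ n := by
    refine (NormedSpace.expSeries_summable' (𝕂 := ℂ) c).congr fun n => ?_
    rw [smul_eq_mul]
  have hs : Summable fun n : ℕ => (((n+1).factorial : ℂ))⁻¹ * c ^ (n+1) :=
    (summable_nat_add_iff (f := fun n : ℕ => ((n.factorial : ℂ))⁻¹ * c ^ n) 1).2 hsumc
  have h1 : NormedSpace.exp (c • P) = ∑' n : ℕ, (((n.factorial : ℂ))⁻¹ * c ^ n) • P ^ n := by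
    rw [NormedSpace.exp_eq_tsum (𝕂 := ℂ)]
    exact tsum_congr fun n => by rw [smul_pow, smul_smul]
  rw [h1, Summable.tsum_eq_zero_add hsum]
  have h2 : (fun n : ℕ => ((((n+1).factorial : ℂ))⁻¹ * c ^ (n+1)) • P ^ (n+1))
      = fun n : ℕ => ((((n+1).factorial : ℂ))⁻¹ * c ^ (n+1)) • P := by
    funext n; rw [myPowIdem P hP]
  rw [h2]
  have h5 : (∑' n : ℕ, ((((n+1).factorial : ℂ))⁻¹ * c ^ (n+1)) • P)
      = (∑' n : ℕ, (((n+1).factorial : ℂ))⁻¹ * c ^ (n+1)) • P := Summable.tsum_smul_const hs P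
  rw [h5]
  have h3 : (∑' n : ℕ, ((((n+1).factorial : ℂ))⁻¹) * c ^ (n+1)) = Complex.exp c - 1 := by
    have h4 : Complex.exp c = ∑' n : ℕ, ((n.factorial : ℂ))⁻¹ * c ^ n := by
      rw [Complex.exp_eq_exp_ℂ, NormedSpace.exp_eq_tsum (𝕂 := ℂ)]
      exact tsum_congr fun n => by rw [smul_eq_mul]
    rw [h4, Summable.tsum_eq_zero_add hsumc]
    simp
  rw [h3]
  simp

lemma myCore (D : X →L[ℂ] X) (hD : D * D = 0)
    (hn : ‖(1 : X →L[ℂ] X) + (2:ℂ) • D‖ ≤ 1) : D = 0 := by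
  set W : X →L[ℂ] X := 1 + (2:ℂ) • D with hW
  have hpow : ∀ n : ℕ, W ^ n = 1 + ((2 * n : ℂ)) • D := by
    intro n
    induction n with
    | zero => simp
    | succ k ih =>
      have hsplit : ((2 * ((k:ℕ)+1) : ℂ)) • D = ((2*(k:ℕ) : ℂ)) • D + (2:ℂ) • D := by
        push_cast
        rw [← add_smul]
        ring_nf
      rw [pow_succ, ih, hW, add_mul, one_mul, mul_add, mul_one, smul_mul_assoc,
        mul_smul_comm, hD, smul_zero, smul_zero, add_zero]
      push_cast at hsplit ⊢
      rw [hsplit]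
      abel
  have hWn : ∀ n : ℕ, ‖W ^ n‖ ≤ 1 := by
    intro n
    induction n with
    | zero => rw [pow_zero]; exact ContinuousLinearMap.norm_id_le
    | succ k ih =>
      calc ‖W ^ (k+1)‖ = ‖W ^ k * W‖ := by rw [pow_succ]
        _ ≤ ‖W ^ k‖ * ‖W‖ := norm_mul_le _ _
        _ ≤ 1 * 1 := mul_le_mul ih hn (norm_nonneg _) zero_le_one
        _ = 1 := one_mul 1
  have key : ∀ n : ℕ, 2 * n * ‖D‖ ≤ 2 := by
    intro n
    have h1 : ‖((2 * n : ℂ)) • D‖ = 2 * n * ‖D‖ := by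
      rw [norm_smul (2 * (n:ℂ)) D]
      norm_num
    have h2 : ((2 * n : ℂ)) • D = W ^ n - 1 := by rw [hpow n]; abel
    have h4 : ‖(1 : X →L[ℂ] X)‖ ≤ 1 := by exact ContinuousLinearMap.norm_id_le
    calc 2 * n * ‖D‖ = ‖W ^ n - 1‖ := by rw [← h1, h2]
      _ ≤ ‖W ^ n‖ + ‖(1 : X →L[ℂ] X)‖ := norm_sub_le _ _
      _ ≤ 1 + 1 := add_le_add (hWn n) h4
      _ = 2 := by norm_num
  by_contra hne
  have hpos : 0 < ‖D‖ := norm_pos_iff.2 hne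
  obtain ⟨n, hnn⟩ := exists_nat_gt (1 / ‖D‖)
  have h5 : 1 < n * ‖D‖ := by
    rw [div_lt_iff₀ hpos] at hnn
    linarith
  nlinarith [key n]

lemma myHermNormOne (P : X →L[ℂ] X) (hP : P * P = P) (hherm : IsHermitianOp P) :
    ‖(1 : X →L[ℂ] X) + (-2:ℂ) • P‖ = 1 := by
  have h := hherm Real.pi
  rw [myExpIdem P hP] at h
  have he : Complex.exp (Complex.I * (Real.pi : ℂ)) = -1 := by
    rw [mul_comm]; exact Complex.exp_pi_mul_I
  rw [he] at h
  norm_num at h ⊢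
  exact h

lemma myHermProjEq (P Q : X →L[ℂ] X) (hP : P * P = P) (hQ : Q * Q = Q)
    (hermP : IsHermitianOp P) (hermQ : IsHermitianOp Q)
    (hPQ : P * Q = P) (hQP : Q * P = Q) : P = Q := by
  have hU := myHermNormOne P hP hermP
  have hV := myHermNormOne Q hQ hermQ
  have hD : (P - Q) * (P - Q) = 0 := by
    rw [sub_mul, mul_sub, mul_sub, hP, hQ, hPQ, hQP]
    abel
  have hUV : ((1 : X →L[ℂ] X) + (-2:ℂ) • P) * ((1 : X →L[ℂ] X) + (-2:ℂ) • Q)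
      = (1 : X →L[ℂ] X) + (2:ℂ) • (P - Q) := by
    rw [add_mul, one_mul, mul_add, mul_one, smul_mul_assoc, mul_smul_comm, hPQ]
    module
  have hn : ‖(1 : X →L[ℂ] X) + (2:ℂ) • (P - Q)‖ ≤ 1 := by
    rw [← hUV]
    calc ‖((1 : X →L[ℂ] X) + (-2:ℂ) • P) * ((1 : X →L[ℂ] X) + (-2:ℂ) • Q)‖
        ≤ ‖(1 : X →L[ℂ] X) + (-2:ℂ) • P‖ * ‖(1 : X →L[ℂ] X) + (-2:ℂ) • Q‖ := norm_mul_le _ _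
      _ = 1 := by rw [hU, hV, one_mul]
  exact sub_eq_zero.mp (myCore (P - Q) hD hn)

lemma myHermProjEq' (P Q : X →L[ℂ] X) (hP : P * P = P) (hQ : Q * Q = Q)
    (hermP : IsHermitianOp P) (hermQ : IsHermitianOp Q)
    (hPQ : P * Q = Q) (hQP : Q * P = P) : P = Q := by
  have hU := myHermNormOne P hP hermP
  have hV := myHermNormOne Q hQ hermQ
  have hD : (Q - P) * (Q - P) = 0 := by
    rw [sub_mul, mul_sub, mul_sub, hP, hQ, hPQ, hQP]
    abel
  have hUV : ((1 : X →L[ℂ] X) + (-2:ℂ) • P) * ((1 : X →L[ℂ] X) + (-2:ℂ) • Q)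
      = (1 : X →L[ℂ] X) + (2:ℂ) • (Q - P) := by
    rw [add_mul, one_mul, mul_add, mul_one, smul_mul_assoc, mul_smul_comm, hPQ]
    module
  have hn : ‖(1 : X →L[ℂ] X) + (2:ℂ) • (Q - P)‖ ≤ 1 := by
    rw [← hUV]
    calc ‖((1 : X →L[ℂ] X) + (-2:ℂ) • P) * ((1 : X →L[ℂ] X) + (-2:ℂ) • Q)‖
        ≤ ‖(1 : X →L[ℂ] X) + (-2:ℂ) • P‖ * ‖(1 : X →L[ℂ] X) + (-2:ℂ) • Q‖ := norm_mul_le _ _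
      _ = 1 := by rw [hU, hV, one_mul]
  exact (sub_eq_zero.mp (myCore (Q - P) hD hn)).symm

end AuxLemmas

/-- For `T = BC` with `C` surjective, `B` injective, and Moore–Penrose inverses `T†`, `B†`,
`C†`: `T` is EP iff `B = C†W` for a bijective `W`, iff `B = C†W₁` for a surjective `W₁`,
iff `B = C†W₂` and `C† = BW₃`, iff `B = C†H₂` and `C = H₁B†`, iff `C† = BK₂` and
`B† = K₁C`, iff `C† = BS₂` for a surjective `S₂`. -/
theorem ep_tfae_right_factor {X Y : Type*}
    [NormedAddCommGroup X] [NormedSpace ℂ X] [CompleteSpace X]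
    [NormedAddCommGroup Y] [NormedSpace ℂ Y] [CompleteSpace Y]
    (T : X →L[ℂ] X) (C : X →L[ℂ] Y) (B : Y →L[ℂ] X)
    (hC : Function.Surjective C) (hB : Function.Injective B) (hT : T = B ∘L C)
    (Td : X →L[ℂ] X) (Bd : X →L[ℂ] Y) (Cd : Y →L[ℂ] X)
    (hTd : IsMPInv T Td) (hBd : IsMPInv B Bd) (hCd : IsMPInv C Cd) :
    List.TFAE
      [T ∘L Td = Td ∘L T,
       ∃ W : Y →L[ℂ] Y, Function.Bijective W ∧ B = Cd ∘L W,
       ∃ W₁ : Y →L[ℂ] Y, Function.Surjective W₁ ∧ B = Cd ∘L W₁,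
       ∃ W₂ W₃ : Y →L[ℂ] Y, B = Cd ∘L W₂ ∧ Cd = B ∘L W₃,
       ∃ H₁ H₂ : Y →L[ℂ] Y, B = Cd ∘L H₂ ∧ C = H₁ ∘L Bd,
       ∃ K₁ K₂ : Y →L[ℂ] Y, Cd = B ∘L K₂ ∧ Bd = K₁ ∘L C,
       ∃ S₂ : Y →L[ℂ] Y, Function.Surjective S₂ ∧ Cd = B ∘L S₂] := by
  -- pointwise basic facts
  have fB : ∀ y, Bd (B y) = y := fun y => hB (by
    calc B (Bd (B y)) = (B ∘L (Bd ∘L B)) y := rfl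
      _ = B y := by rw [hBd.1])
  have fC : ∀ y, C (Cd y) = y := by
    intro y
    obtain ⟨x, rfl⟩ := hC y
    calc C (Cd (C x)) = (C ∘L (Cd ∘L C)) x := rfl
      _ = C x := by rw [hCd.1]
  have hTpt : ∀ x, T x = B (C x) := fun x => by rw [hT]; rfl
  have hTd1 : ∀ z, T (Td (T z)) = T z := fun z => by
    calc T (Td (T z)) = (T ∘L (Td ∘L T)) z := rfl
      _ = T z := by rw [hTd.1]
  -- idempotency of B∘Bd and Cd∘C
  have hPP : (B ∘L Bd) * (B ∘L Bd) = B ∘L Bd := by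
    ext x
    simp only [ContinuousLinearMap.mul_apply, ContinuousLinearMap.comp_apply]
    rw [fB]
  have hQQ : (Cd ∘L C) * (Cd ∘L C) = Cd ∘L C := by
    ext x
    simp only [ContinuousLinearMap.mul_apply, ContinuousLinearMap.comp_apply]
    rw [fC]
  -- T Td = B Bd
  have hTTdB : ∀ z, T (Td (B z)) = B z := by
    intro z
    obtain ⟨x, rfl⟩ := hC z
    rw [← hTpt, hTd1]
  have hTT : T ∘L Td = B ∘L Bd := by
    refine myHermProjEq' (T ∘L Td) (B ∘L Bd) ?_ hPP hTd.2.2.2 hBd.2.2.2 ?_ ?_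
    · ext x
      simp only [ContinuousLinearMap.mul_apply, ContinuousLinearMap.comp_apply]
      exact hTd1 (Td x)
    · ext x
      simp only [ContinuousLinearMap.mul_apply, ContinuousLinearMap.comp_apply]
      exact hTTdB (Bd x)
    · ext x
      simp only [ContinuousLinearMap.mul_apply, ContinuousLinearMap.comp_apply]
      rw [hTpt (Td x), fB]
  -- Td T = Cd C
  have hST : Td ∘L T = Cd ∘L C := by
    refine myHermProjEq (Td ∘L T) (Cd ∘L C) ?_ hQQ hTd.2.2.1 hCd.2.2.1 ?_ ?_
    · ext x
      simp only [ContinuousLinearMap.mul_apply, ContinuousLinearMap.comp_apply]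
      rw [hTd1]
    · ext x
      simp only [ContinuousLinearMap.mul_apply, ContinuousLinearMap.comp_apply]
      rw [hTpt (Cd (C x)), fC, ← hTpt]
    · ext x
      simp only [ContinuousLinearMap.mul_apply, ContinuousLinearMap.comp_apply]
      have hc : C (Td (T x)) = C x := hB (by rw [← hTpt, ← hTpt]; exact hTd1 x)
      rw [hc]
  -- hub helpers
  have hubPt : (B ∘L Bd = Cd ∘L C) → ∀ x, B (Bd x) = Cd (C x) := fun h x => by
    calc B (Bd x) = (B ∘L Bd) x := rfl
      _ = (Cd ∘L C) x := by rw [h]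
      _ = Cd (C x) := rfl
  have crossHub : (∀ y, Cd (C (B y)) = B y) → (∀ x, B (Bd (Cd x)) = Cd x) →
      B ∘L Bd = Cd ∘L C := by
    intro e1 e2
    refine myHermProjEq' (B ∘L Bd) (Cd ∘L C) hPP hQQ hBd.2.2.2 hCd.2.2.1 ?_ ?_
    · ext x
      simp only [ContinuousLinearMap.mul_apply, ContinuousLinearMap.comp_apply]
      exact e2 (C x)
    · ext x
      simp only [ContinuousLinearMap.mul_apply, ContinuousLinearMap.comp_apply]
      exact e1 (Bd x)
  -- the individual equivalences with the hub statement
  have i1 : (T ∘L Td = Td ∘L T) ↔ (B ∘L Bd = Cd ∘L C) := by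
    rw [hTT, hST]
  have i2 : (∃ W : Y →L[ℂ] Y, Function.Bijective W ∧ B = Cd ∘L W)
      ↔ (B ∘L Bd = Cd ∘L C) := by
    constructor
    · rintro ⟨W, hWbij, hBeq⟩
      have hBpt : ∀ y, B y = Cd (W y) := fun y => by rw [hBeq]; rfl
      apply crossHub
      · intro y; rw [hBpt y, fC]
      · intro x
        obtain ⟨u, hu⟩ := hWbij.2 x
        rw [← hu, ← hBpt u, fB]
    · intro h
      have hh := hubPt h
      have eCB : ∀ y, Cd (C (B y)) = B y := fun y => by rw [← hh (B y), fB]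
      have eBC : ∀ x, B (Bd (Cd x)) = Cd x := fun x => by rw [hh (Cd x), fC]
      refine ⟨C ∘L B, ⟨?_, ?_⟩, ?_⟩
      · intro a b hab
        simp only [ContinuousLinearMap.comp_apply] at hab
        exact hB (by rw [← eCB a, ← eCB b, hab])
      · intro z
        refine ⟨Bd (Cd z), ?_⟩
        show C (B (Bd (Cd z))) = z
        rw [eBC z, fC]
      · ext y
        simp only [ContinuousLinearMap.comp_apply]
        exact (eCB y).symm
  have i3 : (∃ W₁ : Y →L[ℂ] Y, Function.Surjective W₁ ∧ B = Cd ∘L W₁)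
      ↔ (B ∘L Bd = Cd ∘L C) := by
    constructor
    · rintro ⟨W, hWs, hBeq⟩
      have hBpt : ∀ y, B y = Cd (W y) := fun y => by rw [hBeq]; rfl
      apply crossHub
      · intro y; rw [hBpt y, fC]
      · intro x
        obtain ⟨u, hu⟩ := hWs x
        rw [← hu, ← hBpt u, fB]
    · intro h
      obtain ⟨W, hWbij, hBeq⟩ := i2.mpr h
      exact ⟨W, hWbij.2, hBeq⟩
  have i4 : (∃ W₂ W₃ : Y →L[ℂ] Y, B = Cd ∘L W₂ ∧ Cd = B ∘L W₃)
      ↔ (B ∘L Bd = Cd ∘L C) := by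
    constructor
    · rintro ⟨W₂, W₃, hB2, hC3⟩
      have hBpt : ∀ y, B y = Cd (W₂ y) := fun y => by rw [hB2]; rfl
      have hCpt : ∀ x, Cd x = B (W₃ x) := fun x => by rw [hC3]; rfl
      apply crossHub
      · intro y; rw [hBpt y, fC]
      · intro x; rw [hCpt x, fB]
    · intro h
      have hh := hubPt h
      have eCB : ∀ y, Cd (C (B y)) = B y := fun y => by rw [← hh (B y), fB]
      have eBC : ∀ x, B (Bd (Cd x)) = Cd x := fun x => by rw [hh (Cd x), fC]
      refine ⟨C ∘L B, Bd ∘L Cd, ?_, ?_⟩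
      · ext y
        simp only [ContinuousLinearMap.comp_apply]
        exact (eCB y).symm
      · ext x
        simp only [ContinuousLinearMap.comp_apply]
        exact (eBC x).symm
  have i5 : (∃ H₁ H₂ : Y →L[ℂ] Y, B = Cd ∘L H₂ ∧ C = H₁ ∘L Bd)
      ↔ (B ∘L Bd = Cd ∘L C) := by
    constructor
    · rintro ⟨H₁, H₂, hB2, hC1⟩
      have hBpt : ∀ y, B y = Cd (H₂ y) := fun y => by rw [hB2]; rfl
      have hCpt : ∀ z, C z = H₁ (Bd z) := fun z => by rw [hC1]; rfl
      have eCB : ∀ y, Cd (C (B y)) = B y := fun y => by rw [hBpt y, fC]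
      have eC : ∀ x, C (B (Bd x)) = C x := fun x => by
        rw [hCpt (B (Bd x)), fB, ← hCpt]
      ext x
      simp only [ContinuousLinearMap.comp_apply]
      calc B (Bd x) = Cd (C (B (Bd x))) := (eCB (Bd x)).symm
        _ = Cd (C x) := by rw [eC x]
    · intro h
      have hh := hubPt h
      have eCB : ∀ y, Cd (C (B y)) = B y := fun y => by rw [← hh (B y), fB]
      refine ⟨C ∘L B, C ∘L B, ?_, ?_⟩
      · ext y
        simp only [ContinuousLinearMap.comp_apply]
        exact (eCB y).symm
      · ext x
        simp only [ContinuousLinearMap.comp_apply]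
        exact (by rw [hh x, fC] : C (B (Bd x)) = C x).symm
  have i6 : (∃ K₁ K₂ : Y →L[ℂ] Y, Cd = B ∘L K₂ ∧ Bd = K₁ ∘L C)
      ↔ (B ∘L Bd = Cd ∘L C) := by
    constructor
    · rintro ⟨K₁, K₂, hC2, hB1⟩
      have hCpt : ∀ x, Cd x = B (K₂ x) := fun x => by rw [hC2]; rfl
      have hBdpt : ∀ z, Bd z = K₁ (C z) := fun z => by rw [hB1]; rfl
      have eBC : ∀ x, B (Bd (Cd x)) = Cd x := fun x => by rw [hCpt x, fB]
      have eBd : ∀ x, Bd (Cd (C x)) = Bd x := fun x => by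
        rw [hBdpt (Cd (C x)), fC, ← hBdpt]
      ext x
      simp only [ContinuousLinearMap.comp_apply]
      calc B (Bd x) = B (Bd (Cd (C x))) := by rw [eBd x]
        _ = Cd (C x) := eBC (C x)
    · intro h
      have hh := hubPt h
      have eBC : ∀ x, B (Bd (Cd x)) = Cd x := fun x => by rw [hh (Cd x), fC]
      refine ⟨Bd ∘L Cd, Bd ∘L Cd, ?_, ?_⟩
      · ext x
        simp only [ContinuousLinearMap.comp_apply]
        exact (eBC x).symm
      · ext x
        simp only [ContinuousLinearMap.comp_apply]
        rw [← hh x, fB]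
  have i7 : (∃ S₂ : Y →L[ℂ] Y, Function.Surjective S₂ ∧ Cd = B ∘L S₂)
      ↔ (B ∘L Bd = Cd ∘L C) := by
    constructor
    · rintro ⟨S₂, hS2s, hCeq⟩
      have hCpt : ∀ x, Cd x = B (S₂ x) := fun x => by rw [hCeq]; rfl
      apply crossHub
      · intro y
        obtain ⟨u, hu⟩ := hS2s y
        rw [← hu, ← hCpt u, fC]
      · intro x; rw [hCpt x, fB]
    · intro h
      have hh := hubPt h
      have eCB : ∀ y, Cd (C (B y)) = B y := fun y => by rw [← hh (B y), fB]
      have eBC : ∀ x, B (Bd (Cd x)) = Cd x := fun x => by rw [hh (Cd x), fC]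
      refine ⟨Bd ∘L Cd, ?_, ?_⟩
      · intro z
        refine ⟨C (B z), ?_⟩
        show Bd (Cd (C (B z))) = z
        rw [eCB z, fB]
      · ext x
        simp only [ContinuousLinearMap.comp_apply]
        exact (eBC x).symm
  apply List.tfae_of_forall (B ∘L Bd = Cd ∘L C)
  intro p hp
  simp only [List.mem_cons, List.not_mem_nil, or_false] at hp
  rcases hp with rfl | rfl | rfl | rfl | rfl | rfl | rfl
  · exact i1
  · exact i2
  · exact i3
  · exact i4
  · exact i5
  · exact i6
  · exact i7
end
end

section
/- Let A be a unital C*-algebra with unit e and let a ∈ A have a Moore-Penrose inverse a†. (i) If p = aa†, then v = e − p + (a†)*a† is invertible in A, a† = a*v, and aa*v = vaa* = p. (ii) If q = a†a, then w = e − q + a†(a†)* is invertible in A, a† = wa*, and wa*a = a*aw = q. -/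
noncomputable section

/-- `x` is a Moore–Penrose inverse of `a` in a C*-algebra: `axa = a`, `xax = x`, and
`ax`, `xa` are self-adjoint. -/
def IsMPInvStar {A : Type*} [Ring A] [StarRing A] (a x : A) : Prop :=
  a * x * a = a ∧ x * a * x = x ∧ IsSelfAdjoint (a * x) ∧ IsSelfAdjoint (x * a)

variable {A : Type*} [NormedRing A] [StarRing A] [CStarRing A] [CompleteSpace A]
  [NormedAlgebra ℂ A] [StarModule ℂ A]

private lemma mp_key {R : Type*} [Ring R] (p s t : R)
    (f1 : p * p = p) (f2 : p * t = t) (f3 : s * p = s) (f4 : s * t = p)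
    (f5 : t * p = t) (f6 : t * s = p) (f7 : p * s = s) :
    (1 - p + s) * (1 - p + t) = 1 ∧ (1 - p + t) * (1 - p + s) = 1 ∧
      t * (1 - p + s) = p ∧ (1 - p + s) * t = p := by
  refine ⟨?_, ?_, ?_, ?_⟩ <;>
  · simp only [mul_add, add_mul, mul_sub, sub_mul, mul_one, one_mul,
      f1, f2, f3, f4, f5, f6, f7]
    abel

/-- For `a` Moore–Penrose invertible in a unital C*-algebra, with `p = aa†` and
`v = e − p + (a†)*a†`: `v` is invertible, `a† = a*v` and `aa*v = vaa* = p`; with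
`q = a†a` and `w = e − q + a†(a†)*`: `w` is invertible, `a† = wa*` and
`wa*a = a*aw = q`. -/
theorem mpInv_star_representation (a ad : A) (had : IsMPInvStar a ad) :
    (IsUnit (1 - a * ad + star ad * ad) ∧
      ad = star a * (1 - a * ad + star ad * ad) ∧
      a * star a * (1 - a * ad + star ad * ad) = a * ad ∧
      (1 - a * ad + star ad * ad) * (a * star a) = a * ad) ∧
    (IsUnit (1 - ad * a + ad * star ad) ∧
      ad = (1 - ad * a + ad * star ad) * star a ∧
      (1 - ad * a + ad * star ad) * (star a * a) = ad * a ∧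
      star a * a * (1 - ad * a + ad * star ad) = ad * a) := by
  obtain ⟨h1, h2, h3, h4⟩ := had
  have hs3 : star ad * star a = a * ad := by
    have := h3.star_eq; rwa [star_mul] at this
  have hs4 : star a * star ad = ad * a := by
    have := h4.star_eq; rwa [star_mul] at this
  -- basic consequences
  have e1 : star a * (a * ad) = star a := by
    conv_lhs => rw [← h3.star_eq, ← star_mul, h1]
  have e1' : ad * a * star a = star a := by
    conv_lhs => rw [← h4.star_eq, ← star_mul, ← mul_assoc, h1]
  have e2 : a * ad * star ad = star ad := by
    conv_lhs => rw [← h3.star_eq, ← star_mul, ← mul_assoc, h2]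
  have e2' : star ad * (ad * a) = star ad := by
    conv_lhs => rw [← h4.star_eq, ← star_mul, h2]
  -- Part (i): p = a*ad, s = star ad * ad, t = a * star a
  have f1 : (a * ad) * (a * ad) = a * ad := by rw [← mul_assoc, h1]
  have f2 : (a * ad) * (a * star a) = a * star a := by rw [← mul_assoc, h1]
  have f3 : (star ad * ad) * (a * ad) = star ad * ad := by
    rw [mul_assoc, ← mul_assoc ad a ad, h2]
  have f4 : (star ad * ad) * (a * star a) = a * ad := by
    rw [mul_assoc, ← mul_assoc ad a, e1', hs3]
  have f5 : (a * star a) * (a * ad) = a * star a := by rw [mul_assoc, e1]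
  have f6 : (a * star a) * (star ad * ad) = a * ad := by
    rw [mul_assoc, ← mul_assoc (star a), hs4, h2]
  have f7 : (a * ad) * (star ad * ad) = star ad * ad := by rw [← mul_assoc, e2]
  obtain ⟨k1, k2, k3, k4⟩ := mp_key (a * ad) (star ad * ad) (a * star a) f1 f2 f3 f4 f5 f6 f7
  have g1 : star a * (1 - a * ad + star ad * ad) = ad := by
    have aux : star a * (star ad * ad) = ad := by rw [← mul_assoc, hs4, h2]
    rw [mul_add, mul_sub, mul_one, e1, aux, sub_self, zero_add]
  -- Part (ii): p₂ = ad*a, s₂ = ad * star ad, t₂ = star a * a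
  have f1' : (ad * a) * (ad * a) = ad * a := by rw [← mul_assoc, h2]
  have f2' : (ad * a) * (star a * a) = star a * a := by rw [← mul_assoc, e1']
  have f3' : (ad * star ad) * (ad * a) = ad * star ad := by rw [mul_assoc, e2']
  have f4' : (ad * star ad) * (star a * a) = ad * a := by
    rw [mul_assoc, ← mul_assoc (star ad), hs3, h1]
  have f5' : (star a * a) * (ad * a) = star a * a := by
    rw [mul_assoc, ← mul_assoc a ad a, h1]
  have f6' : (star a * a) * (ad * star ad) = ad * a := by
    rw [mul_assoc, ← mul_assoc a ad, e2, hs4]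
  have f7' : (ad * a) * (ad * star ad) = ad * star ad := by rw [← mul_assoc, h2]
  obtain ⟨l1, l2, l3, l4⟩ :=
    mp_key (ad * a) (ad * star ad) (star a * a) f1' f2' f3' f4' f5' f6' f7'
  have g2 : (1 - ad * a + ad * star ad) * star a = ad := by
    have aux : (ad * star ad) * star a = ad := by rw [mul_assoc, hs3, ← mul_assoc, h2]
    rw [add_mul, sub_mul, one_mul, e1', aux, sub_self, zero_add]
  exact ⟨⟨⟨⟨_, _, k1, k2⟩, rfl⟩, g1.symm, k3, k4⟩,
    ⟨⟨⟨_, _, l1, l2⟩, rfl⟩, g2.symm, l4, l3⟩⟩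
end
end

section
/- Let A be a unital C*-algebra with unit e and let a, b, c ∈ A be such that a has a Moore-Penrose inverse a†, a = bc, b⁻¹(0) = 0, and cA = A; let b† and c† denote the Moore-Penrose inverses of b and c, let p = aa†, v = e − p + (a†)*a†, q = a†a, and w = e − q + a†(a†)*. Then: (i) b†(b†)* is invertible with inverse b*b; (ii) (c†)*c† is invertible with inverse cc*; (iii) vb = (b†)*(c†)*c† and cw = b†(b†)*(c†)*. -/
noncomputable section

lemma mp_unique {A : Type*} [Ring A] [StarRing A] {a x y : A}
    (hx : IsMPInvStar a x) (hy : IsMPInvStar a y) : x = y := by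
  obtain ⟨hx1, hx2, hx3, hx4⟩ := hx
  obtain ⟨hy1, hy2, hy3, hy4⟩ := hy
  have hax : a * x = a * y := by
    calc a * x = star (a * x) := hx3.star_eq.symm
      _ = star (a * y * a * x) := by rw [hy1]
      _ = star ((a * y) * (a * x)) := by rw [mul_assoc]
      _ = star (a * x) * star (a * y) := by rw [star_mul]
      _ = (a * x) * (a * y) := by rw [hx3.star_eq, hy3.star_eq]
      _ = (a * x * a) * y := by noncomm_ring
      _ = a * y := by rw [hx1]
  have hxa : x * a = y * a := by
    calc x * a = star (x * a) := hx4.star_eq.symm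
      _ = star (x * (a * y * a)) := by rw [hy1]
      _ = star ((x * a) * (y * a)) := by noncomm_ring
      _ = star (y * a) * star (x * a) := by rw [star_mul]
      _ = (y * a) * (x * a) := by rw [hx4.star_eq, hy4.star_eq]
      _ = y * (a * x) * a := by noncomm_ring
      _ = y * (a * y) * a := by rw [hax]
      _ = y * a := by rw [mul_assoc, hy1]
  calc x = x * a * x := hx2.symm
    _ = y * a * x := by rw [hxa]
    _ = y * (a * x) := by rw [mul_assoc]
    _ = y * (a * y) := by rw [hax]
    _ = y := by rw [← mul_assoc, hy2]

variable {A : Type*} [NormedRing A] [StarRing A] [CStarRing A] [CompleteSpace A]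
  [NormedAlgebra ℂ A] [StarModule ℂ A]

/-- If `a = bc` with `b⁻¹(0) = 0`, `cA = A` and Moore–Penrose inverses `a†`, `b†`, `c†`,
with `v = e − aa† + (a†)*a†` and `w = e − a†a + a†(a†)*`: `b†(b†)*` is invertible with
inverse `b*b`, `(c†)*c†` is invertible with inverse `cc*`, and `vb = (b†)*(c†)*c†`,
`cw = b†(b†)*(c†)*`. -/
theorem mpInv_star_factorization_identities (a b c ad bd cd : A)
    (had : IsMPInvStar a ad) (hbd : IsMPInvStar b bd) (hcd : IsMPInvStar c cd)
    (habc : a = b * c)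
    (hb : {x : A | b * x = 0} = {0}) (hc : {y : A | ∃ x, y = c * x} = Set.univ) :
    (IsUnit (bd * star bd) ∧ bd * star bd * (star b * b) = 1 ∧
      (star b * b) * (bd * star bd) = 1) ∧
    (IsUnit (star cd * cd) ∧ star cd * cd * (c * star c) = 1 ∧
      (c * star c) * (star cd * cd) = 1) ∧
    (1 - a * ad + star ad * ad) * b = star bd * star cd * cd ∧
    c * (1 - ad * a + ad * star ad) = bd * star bd * star cd := by
  obtain ⟨hb1, hb2, hb3, hb4⟩ := hbd
  obtain ⟨hc1, hc2, hc3, hc4⟩ := hcd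
  -- b† b = 1
  have hbdb : bd * b = 1 := by
    have hmem : bd * b - 1 ∈ {x : A | b * x = 0} := by
      simp only [Set.mem_setOf_eq, mul_sub, mul_one, ← mul_assoc, hb1, sub_self]
    rw [hb, Set.mem_singleton_iff, sub_eq_zero] at hmem
    exact hmem
  -- c c† = 1
  have hccd : c * cd = 1 := by
    have h1 : (1 : A) ∈ {y : A | ∃ x, y = c * x} := by rw [hc]; trivial
    obtain ⟨x, hx⟩ := h1
    calc c * cd = c * cd * (c * x) := by rw [← hx, mul_one]
      _ = (c * cd * c) * x := by noncomm_ring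
      _ = c * x := by rw [hc1]
      _ = 1 := hx.symm
  -- ad = cd * bd by uniqueness
  have key : ad = cd * bd := by
    refine mp_unique had ⟨?_, ?_, ?_, ?_⟩
    · rw [habc]
      calc b * c * (cd * bd) * (b * c) = b * (c * cd) * (bd * b) * c := by noncomm_ring
        _ = b * c := by rw [hccd, hbdb, mul_one, mul_one]
    · rw [habc]
      calc cd * bd * (b * c) * (cd * bd) = cd * (bd * b) * (c * cd) * bd := by noncomm_ring
        _ = cd * bd := by rw [hccd, hbdb, mul_one, mul_one]
    · rw [habc]
      have : b * c * (cd * bd) = b * bd := by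
        calc b * c * (cd * bd) = b * (c * cd) * bd := by noncomm_ring
          _ = b * bd := by rw [hccd, mul_one]
      rw [this]; exact hb3
    · rw [habc]
      have : cd * bd * (b * c) = cd * c := by
        calc cd * bd * (b * c) = cd * (bd * b) * c := by noncomm_ring
          _ = cd * c := by rw [hbdb, mul_one]
      rw [this]; exact hc4
  refine ⟨⟨?_, ?_, ?_⟩, ⟨?_, ?_, ?_⟩, ?_, ?_⟩
  · refine ⟨⟨bd * star bd, star b * b, ?_, ?_⟩, rfl⟩
    · calc bd * star bd * (star b * b) = bd * (star bd * star b) * b := by noncomm_ring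
        _ = bd * star (b * bd) * b := by rw [star_mul]
        _ = bd * (b * bd) * b := by rw [hb3.star_eq]
        _ = (bd * b) * (bd * b) := by noncomm_ring
        _ = 1 := by rw [hbdb, mul_one]
    · calc (star b * b) * (bd * star bd) = star b * (b * bd) * star bd := by noncomm_ring
        _ = star b * star (b * bd) * star bd := by rw [hb3.star_eq]
        _ = (star b * star bd) * (star b * star bd) := by rw [star_mul]; noncomm_ring
        _ = star (bd * b) * star (bd * b) := by rw [star_mul]
        _ = 1 := by rw [hbdb, star_one, mul_one]
  · calc bd * star bd * (star b * b) = bd * (star bd * star b) * b := by noncomm_ring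
      _ = bd * star (b * bd) * b := by rw [star_mul]
      _ = bd * (b * bd) * b := by rw [hb3.star_eq]
      _ = (bd * b) * (bd * b) := by noncomm_ring
      _ = 1 := by rw [hbdb, mul_one]
  · calc (star b * b) * (bd * star bd) = star b * (b * bd) * star bd := by noncomm_ring
      _ = star b * star (b * bd) * star bd := by rw [hb3.star_eq]
      _ = (star b * star bd) * (star b * star bd) := by rw [star_mul]; noncomm_ring
      _ = star (bd * b) * star (bd * b) := by rw [star_mul]
      _ = 1 := by rw [hbdb, star_one, mul_one]
  · refine ⟨⟨star cd * cd, c * star c, ?_, ?_⟩, rfl⟩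
    · calc star cd * cd * (c * star c) = star cd * (cd * c) * star c := by noncomm_ring
        _ = star cd * star (cd * c) * star c := by rw [hc4.star_eq]
        _ = (star cd * star c) * (star cd * star c) := by rw [star_mul]; noncomm_ring
        _ = star (c * cd) * star (c * cd) := by rw [star_mul]
        _ = 1 := by rw [hccd, star_one, mul_one]
    · calc (c * star c) * (star cd * cd) = c * (star c * star cd) * cd := by noncomm_ring
        _ = c * star (cd * c) * cd := by rw [star_mul]
        _ = c * (cd * c) * cd := by rw [hc4.star_eq]
        _ = (c * cd) * (c * cd) := by noncomm_ring
        _ = 1 := by rw [hccd, mul_one]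
  · calc star cd * cd * (c * star c) = star cd * (cd * c) * star c := by noncomm_ring
      _ = star cd * star (cd * c) * star c := by rw [hc4.star_eq]
      _ = (star cd * star c) * (star cd * star c) := by rw [star_mul]; noncomm_ring
      _ = star (c * cd) * star (c * cd) := by rw [star_mul]
      _ = 1 := by rw [hccd, star_one, mul_one]
  · calc (c * star c) * (star cd * cd) = c * (star c * star cd) * cd := by noncomm_ring
      _ = c * star (cd * c) * cd := by rw [star_mul]
      _ = c * (cd * c) * cd := by rw [hc4.star_eq]
      _ = (c * cd) * (c * cd) := by noncomm_ring
      _ = 1 := by rw [hccd, mul_one]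
  · rw [key, habc, star_mul]
    calc (1 - b * c * (cd * bd) + star bd * star cd * (cd * bd)) * b
        = b - b * (c * cd) * (bd * b) + star bd * star cd * cd * (bd * b) := by noncomm_ring
      _ = star bd * star cd * cd := by rw [hccd, hbdb]; noncomm_ring
  · rw [key, habc, star_mul]
    calc c * (1 - cd * bd * (b * c) + cd * bd * (star bd * star cd))
        = c - (c * cd) * (bd * b) * c + (c * cd) * (bd * star bd * star cd) := by noncomm_ring
      _ = bd * star bd * star cd := by rw [hccd, hbdb]; noncomm_ring
end
end

section
/- Let A be a unital C*-algebra with unit e and let a, b, c ∈ A be such that a has a Moore-Penrose inverse a†, a = bc, b⁻¹(0) = 0, and cA = A. Then the following statements are equivalent: (i) a is EP; (ii) a ∈ c*A ∩ Ab*; (iii) (b*)⁻¹(0) = c⁻¹(0); (iv) bA = c*A; (v) b₋₁(0) = (c*)₋₁(0); (vi) Ac = Ab*; (vii) there exists an invertible x ∈ A with c = xb*; (viii) there exists y ∈ A with y⁻¹(0) = 0 and c = yb*; (ix) there exist z₁, z₂ ∈ A with c = z₁b* and b* = z₂c; (x) there exists v ∈ A with vA = A and b = c*v. -/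
noncomputable section

variable {A : Type*} [NormedRing A] [StarRing A] [CStarRing A] [CompleteSpace A]
  [NormedAlgebra ℂ A] [StarModule ℂ A]

/-- If `a = bc` with `b⁻¹(0) = 0`, `cA = A` and `a†` exists in a unital C*-algebra, then
`a` is EP iff any of the displayed conditions involving `b*` and `c*` holds. -/
theorem ep_tfae_star_factorization (a b c ad : A) (had : IsMPInvStar a ad)
    (habc : a = b * c)
    (hb : {x : A | b * x = 0} = {0}) (hc : {y : A | ∃ x, y = c * x} = Set.univ) :
    List.TFAE
      [a * ad = ad * a,
       (∃ x : A, a = star c * x) ∧ (∃ y : A, a = y * star b),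
       {x : A | star b * x = 0} = {x : A | c * x = 0},
       {y : A | ∃ x, y = b * x} = {y : A | ∃ x, y = star c * x},
       {x : A | x * b = 0} = {x : A | x * star c = 0},
       {y : A | ∃ x, y = x * c} = {y : A | ∃ x, y = x * star b},
       ∃ x : A, IsUnit x ∧ c = x * star b,
       ∃ y : A, {x : A | y * x = 0} = {0} ∧ c = y * star b,
       ∃ z₁ z₂ : A, c = z₁ * star b ∧ star b = z₂ * c,
       ∃ v : A, {y : A | ∃ x, y = v * x} = Set.univ ∧ b = star c * v] := by
  obtain ⟨ha1, ha2, hsp, hsq⟩ := had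
  subst habc
  have hp : star (b * c * ad) = b * c * ad := hsp.star_eq
  have hq : star (ad * (b * c)) = ad * (b * c) := hsq.star_eq
  have hbinj : ∀ x : A, b * x = 0 → x = 0 := by
    intro x hx
    have hmem : x ∈ {x : A | b * x = 0} := hx
    rw [hb] at hmem
    simpa using hmem
  have hbstar : ∀ x : A, x * star b = 0 → x = 0 := by
    intro x hx
    have h1 : b * star x = 0 := by
      have := congrArg star hx
      simpa [star_mul] using this
    have h2 := hbinj _ h1
    simpa using congrArg star h2
  obtain ⟨t, ht⟩ : ∃ x : A, (1 : A) = c * x := by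
    have hmem : (1 : A) ∈ {y : A | ∃ x, y = c * x} := by rw [hc]; trivial
    exact hmem
  have key : c * (ad * b) = 1 := by
    have h0 : b * (c * (ad * (b * c)) - c) = 0 := by
      have h0' : b * (c * (ad * (b * c))) = b * c := by
        calc b * (c * (ad * (b * c))) = b * c * ad * (b * c) := by simp only [mul_assoc]
          _ = b * c := ha1
      rw [mul_sub, h0', sub_self]
    have h1 : c * (ad * (b * c)) = c := sub_eq_zero.mp (hbinj _ h0)
    calc c * (ad * b) = c * (ad * b) * (c * t) := by rw [← ht, mul_one]
      _ = c * (ad * (b * c)) * t := by simp only [mul_assoc]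
      _ = c * t := by rw [h1]
      _ = 1 := ht.symm
  have hcq : c * (ad * (b * c)) = c := by
    calc c * (ad * (b * c)) = c * (ad * b) * c := by simp only [mul_assoc]
      _ = 1 * c := by rw [key]
      _ = c := one_mul c
  have hpb : b * c * ad * b = b := by
    calc b * c * ad * b = b * (c * (ad * b)) := by simp only [mul_assoc]
      _ = b * 1 := by rw [key]
      _ = b := mul_one b
  have hpbs : star b * (b * c * ad) = star b := by
    have h := congrArg star hpb
    rw [star_mul, hp] at h
    exact h
  have hqcs : ad * (b * c) * star c = star c := by
    have h := congrArg star hcq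
    rw [star_mul, hq] at h
    exact h
  have hpstar : star ad * (star c * star b) = b * c * ad := by
    rw [← hp]; simp only [star_mul, mul_assoc]
  have hqstar : star c * (star b * star ad) = ad * (b * c) := by
    rw [← hq]; simp only [star_mul, mul_assoc]
  have hpp : b * c * ad * (b * c * ad) = b * c * ad := by
    calc b * c * ad * (b * c * ad) = b * c * ad * (b * c) * ad := by simp only [mul_assoc]
      _ = b * c * ad := by rw [ha1]
  have hqq : ad * (b * c) * (ad * (b * c)) = ad * (b * c) := by
    calc ad * (b * c) * (ad * (b * c)) = ad * (b * c) * ad * (b * c) := by simp only [mul_assoc]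
      _ = ad * (b * c) := by rw [ha2]
  have L1 : ∀ x : A, star b * x = 0 ↔ b * c * ad * x = 0 := by
    intro x
    constructor
    · intro hx
      calc b * c * ad * x = star ad * (star c * star b) * x := by rw [hpstar]
        _ = star ad * (star c * (star b * x)) := by simp only [mul_assoc]
        _ = 0 := by rw [hx, mul_zero, mul_zero]
    · intro hx
      calc star b * x = star b * (b * c * ad) * x := by rw [hpbs]
        _ = star b * (b * c * ad * x) := by simp only [mul_assoc]
        _ = 0 := by rw [hx, mul_zero]
  have L2 : ∀ x : A, c * x = 0 ↔ ad * (b * c) * x = 0 := by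
    intro x
    constructor
    · intro hx
      calc ad * (b * c) * x = ad * (b * (c * x)) := by simp only [mul_assoc]
        _ = 0 := by rw [hx, mul_zero, mul_zero]
    · intro hx
      calc c * x = c * (ad * (b * c)) * x := by rw [hcq]
        _ = c * (ad * (b * c) * x) := by simp only [mul_assoc]
        _ = 0 := by rw [hx, mul_zero]
  have L3 : ∀ x : A, x * b = 0 ↔ x * (b * c * ad) = 0 := by
    intro x
    constructor
    · intro hx
      calc x * (b * c * ad) = x * b * (c * ad) := by simp only [mul_assoc]
        _ = 0 := by rw [hx, zero_mul]
    · intro hx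
      calc x * b = x * (b * c * ad * b) := by rw [hpb]
        _ = x * (b * c * ad) * b := by simp only [mul_assoc]
        _ = 0 := by rw [hx, zero_mul]
  have L4 : ∀ x : A, x * star c = 0 ↔ x * (ad * (b * c)) = 0 := by
    intro x
    constructor
    · intro hx
      calc x * (ad * (b * c)) = x * (star c * (star b * star ad)) := by rw [hqstar]
        _ = x * star c * (star b * star ad) := by simp only [mul_assoc]
        _ = 0 := by rw [hx, zero_mul]
    · intro hx
      calc x * star c = x * (ad * (b * c) * star c) := by rw [hqcs]
        _ = x * (ad * (b * c)) * star c := by simp only [mul_assoc]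
        _ = 0 := by rw [hx, zero_mul]
  tfae_have 1 → 2 := by
    intro h1
    constructor
    · refine ⟨star b * (star ad * (b * c)), ?_⟩
      calc b * c = b * c * ad * (b * c) := ha1.symm
        _ = ad * (b * c) * (b * c) := by rw [h1]
        _ = star c * (star b * star ad) * (b * c) := by rw [hqstar]
        _ = star c * (star b * (star ad * (b * c))) := by simp only [mul_assoc]
    · refine ⟨b * c * star ad * star c, ?_⟩
      calc b * c = b * c * ad * (b * c) := ha1.symm
        _ = b * c * (ad * (b * c)) := by simp only [mul_assoc]
        _ = b * c * (b * c * ad) := by rw [← h1]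
        _ = b * c * (star ad * (star c * star b)) := by rw [← hpstar]
        _ = b * c * star ad * star c * star b := by simp only [mul_assoc]
  tfae_have 2 → 1 := by
    rintro ⟨⟨x, hx⟩, ⟨y, hy⟩⟩
    have hqa : ad * (b * c) * (b * c) = b * c := by
      calc ad * (b * c) * (b * c) = ad * (b * c) * (star c * x) := by rw [← hx]
        _ = ad * (b * c) * star c * x := by simp only [mul_assoc]
        _ = star c * x := by rw [hqcs]
        _ = b * c := hx.symm
    have hap : b * c * (b * c * ad) = b * c := by
      calc b * c * (b * c * ad) = y * star b * (b * c * ad) := by rw [← hy]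
        _ = y * (star b * (b * c * ad)) := by simp only [mul_assoc]
        _ = y * star b := by rw [hpbs]
        _ = b * c := hy.symm
    have e1 : ad * (b * c) * (b * c * ad) = b * c * ad := by
      calc ad * (b * c) * (b * c * ad) = ad * (b * c) * (b * c) * ad := by simp only [mul_assoc]
        _ = b * c * ad := by rw [hqa]
    have e2 : ad * (b * c) * (b * c * ad) = ad * (b * c) := by
      calc ad * (b * c) * (b * c * ad) = ad * (b * (c * (b * c * ad))) := by simp only [mul_assoc]
        _ = ad * (b * (c * (b * (c * ad)))) := by simp only [mul_assoc]
        _ = ad * (b * c) := by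
            have : b * c * (b * c * ad) = b * c := hap
            calc ad * (b * (c * (b * (c * ad)))) = ad * (b * c * (b * c * ad)) := by
                  simp only [mul_assoc]
              _ = ad * (b * c) := by rw [hap]
    exact e1.symm.trans e2
  tfae_have 1 → 3 := by
    intro h1
    ext x
    simp only [Set.mem_setOf_eq]
    rw [L1 x, L2 x, h1]
  tfae_have 3 → 1 := by
    intro h3
    have hS : ∀ x : A, b * c * ad * x = 0 ↔ ad * (b * c) * x = 0 := fun x =>
      ((L1 x).symm.trans (Set.ext_iff.mp h3 x)).trans (L2 x)
    have hq_p : ad * (b * c) * (1 - b * c * ad) = 0 := by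
      refine (hS _).mp ?_
      rw [mul_sub, mul_one, hpp, sub_self]
    have hp_q : b * c * ad * (1 - ad * (b * c)) = 0 := by
      refine (hS _).mpr ?_
      rw [mul_sub, mul_one, hqq, sub_self]
    have hqp : ad * (b * c) * (b * c * ad) = ad * (b * c) := by
      rw [mul_sub, mul_one] at hq_p
      exact (sub_eq_zero.mp hq_p).symm
    have hpq : b * c * ad * (ad * (b * c)) = b * c * ad := by
      rw [mul_sub, mul_one] at hp_q
      exact (sub_eq_zero.mp hp_q).symm
    calc b * c * ad = star (b * c * ad) := hp.symm
      _ = star (b * c * ad * (ad * (b * c))) := congrArg star hpq.symm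
      _ = star (ad * (b * c)) * star (b * c * ad) := star_mul _ _
      _ = ad * (b * c) * (b * c * ad) := by rw [hp, hq]
      _ = ad * (b * c) := hqp
  tfae_have 1 → 4 := by
    intro h1
    ext y
    simp only [Set.mem_setOf_eq]
    constructor
    · rintro ⟨x, rfl⟩
      refine ⟨star b * (star ad * (b * x)), ?_⟩
      have hqb : ad * (b * c) * b = b := by rw [← h1]; exact hpb
      calc b * x = ad * (b * c) * b * x := by rw [hqb]
        _ = star c * (star b * star ad) * b * x := by rw [hqstar]
        _ = star c * (star b * (star ad * (b * x))) := by simp only [mul_assoc]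
    · rintro ⟨x, rfl⟩
      refine ⟨c * ad * (star c * x), ?_⟩
      have hpc : b * c * ad * star c = star c := by rw [h1]; exact hqcs
      calc star c * x = b * c * ad * star c * x := by rw [hpc]
        _ = b * (c * ad * (star c * x)) := by simp only [mul_assoc]
  tfae_have 4 → 1 := by
    intro h4
    obtain ⟨x, hx⟩ : ∃ x, b = star c * x := by
      have hmem : b ∈ {y : A | ∃ x, y = b * x} := ⟨1, (mul_one b).symm⟩
      rw [h4] at hmem
      exact hmem
    obtain ⟨z, hz⟩ : ∃ z, star c = b * z := by
      have hmem : star c ∈ {y : A | ∃ x, y = star c * x} := ⟨1, (mul_one _).symm⟩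
      rw [← h4] at hmem
      exact hmem
    have hqb : ad * (b * c) * b = b := by
      calc ad * (b * c) * b = ad * (b * c) * (star c * x) := by rw [← hx]
        _ = ad * (b * c) * star c * x := by simp only [mul_assoc]
        _ = star c * x := by rw [hqcs]
        _ = b := hx.symm
    have hpc : b * c * ad * star c = star c := by
      calc b * c * ad * star c = b * c * ad * (b * z) := by rw [← hz]
        _ = b * c * ad * b * z := by simp only [mul_assoc]
        _ = b * z := by rw [hpb]
        _ = star c := hz.symm
    have hqp : ad * (b * c) * (b * c * ad) = b * c * ad := by
      calc ad * (b * c) * (b * c * ad) = ad * (b * c) * b * (c * ad) := by simp only [mul_assoc]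
        _ = b * (c * ad) := by rw [hqb]
        _ = b * c * ad := by simp only [mul_assoc]
    have hpq : b * c * ad * (ad * (b * c)) = ad * (b * c) := by
      calc b * c * ad * (ad * (b * c)) = b * c * ad * (star c * (star b * star ad)) := by
            rw [hqstar]
        _ = b * c * ad * star c * (star b * star ad) := by simp only [mul_assoc]
        _ = star c * (star b * star ad) := by rw [hpc]
        _ = ad * (b * c) := hqstar
    have hfin : b * c * ad * (ad * (b * c)) = b * c * ad := by
      calc b * c * ad * (ad * (b * c)) = star (b * c * ad) * star (ad * (b * c)) := by
            rw [hp, hq]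
        _ = star (ad * (b * c) * (b * c * ad)) := (star_mul _ _).symm
        _ = star (b * c * ad) := congrArg star hqp
        _ = b * c * ad := hp
    exact hfin.symm.trans hpq
  tfae_have 1 → 5 := by
    intro h1
    ext x
    simp only [Set.mem_setOf_eq]
    rw [L3 x, L4 x, h1]
  tfae_have 5 → 1 := by
    intro h5
    have hS : ∀ x : A, x * (b * c * ad) = 0 ↔ x * (ad * (b * c)) = 0 := fun x =>
      ((L3 x).symm.trans (Set.ext_iff.mp h5 x)).trans (L4 x)
    have e1 : (1 - b * c * ad) * (ad * (b * c)) = 0 :=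
      (hS _).mp (by rw [sub_mul, one_mul, hpp, sub_self])
    have e2 : (1 - ad * (b * c)) * (b * c * ad) = 0 :=
      (hS _).mpr (by rw [sub_mul, one_mul, hqq, sub_self])
    have hqpq : ad * (b * c) = b * c * ad * (ad * (b * c)) := by
      rw [sub_mul, one_mul] at e1
      exact sub_eq_zero.mp e1
    have hpqp : b * c * ad = ad * (b * c) * (b * c * ad) := by
      rw [sub_mul, one_mul] at e2
      exact sub_eq_zero.mp e2
    have hqqp : ad * (b * c) = ad * (b * c) * (b * c * ad) := by
      calc ad * (b * c) = star (ad * (b * c)) := hq.symm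
        _ = star (b * c * ad * (ad * (b * c))) := congrArg star hqpq
        _ = star (ad * (b * c)) * star (b * c * ad) := star_mul _ _
        _ = ad * (b * c) * (b * c * ad) := by rw [hp, hq]
    exact hpqp.trans hqqp.symm
  tfae_have 1 → 6 := by
    intro h1
    ext y
    simp only [Set.mem_setOf_eq]
    have hcp : c * (b * c * ad) = c := by rw [h1]; exact hcq
    have hbq : star b * (ad * (b * c)) = star b := by rw [← h1]; exact hpbs
    constructor
    · rintro ⟨x, rfl⟩
      refine ⟨x * (c * (star ad * star c)), ?_⟩
      calc x * c = x * (c * (b * c * ad)) := by rw [hcp]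
        _ = x * (c * (star ad * (star c * star b))) := by rw [hpstar]
        _ = x * (c * (star ad * star c)) * star b := by simp only [mul_assoc]
    · rintro ⟨x, rfl⟩
      refine ⟨x * (star b * (ad * b)), ?_⟩
      calc x * star b = x * (star b * (ad * (b * c))) := by rw [hbq]
        _ = x * (star b * (ad * b)) * c := by simp only [mul_assoc]
  tfae_have 6 → 1 := by
    intro h6
    obtain ⟨x, hx⟩ : ∃ x, c = x * star b := by
      have hmem : c ∈ {y : A | ∃ x, y = x * c} := ⟨1, (one_mul c).symm⟩
      rw [h6] at hmem
      exact hmem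
    obtain ⟨z, hz⟩ : ∃ z, star b = z * c := by
      have hmem : star b ∈ {y : A | ∃ x, y = x * star b} := ⟨1, (one_mul _).symm⟩
      rw [← h6] at hmem
      exact hmem
    have hcp : c * (b * c * ad) = c := by
      calc c * (b * c * ad) = x * star b * (b * c * ad) := by rw [← hx]
        _ = x * (star b * (b * c * ad)) := by simp only [mul_assoc]
        _ = x * star b := by rw [hpbs]
        _ = c := hx.symm
    have hbq : star b * (ad * (b * c)) = star b := by
      calc star b * (ad * (b * c)) = z * c * (ad * (b * c)) := by rw [← hz]
        _ = z * (c * (ad * (b * c))) := by simp only [mul_assoc]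
        _ = z * c := by rw [hcq]
        _ = star b := hz.symm
    have hqp : ad * (b * c) * (b * c * ad) = ad * (b * c) := by
      calc ad * (b * c) * (b * c * ad) = ad * (b * (c * (b * c * ad))) := by
            simp only [mul_assoc]
        _ = ad * (b * (c * (b * (c * ad)))) := by simp only [mul_assoc]
        _ = ad * (b * c) := by
            calc ad * (b * (c * (b * (c * ad)))) = ad * (b * (c * (b * c * ad))) := by
                  simp only [mul_assoc]
              _ = ad * (b * c) := by rw [hcp]
    have hpq : b * c * ad * (ad * (b * c)) = b * c * ad := by
      calc b * c * ad * (ad * (b * c)) = star ad * (star c * star b) * (ad * (b * c)) := by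
            rw [hpstar]
        _ = star ad * (star c * (star b * (ad * (b * c)))) := by simp only [mul_assoc]
        _ = star ad * (star c * star b) := by rw [hbq]
        _ = b * c * ad := hpstar
    have hfin : b * c * ad * (ad * (b * c)) = ad * (b * c) := by
      calc b * c * ad * (ad * (b * c)) = star (b * c * ad) * star (ad * (b * c)) := by
            rw [hp, hq]
        _ = star (ad * (b * c) * (b * c * ad)) := (star_mul _ _).symm
        _ = star (ad * (b * c)) := congrArg star hqp
        _ = ad * (b * c) := hq
    exact hpq.symm.trans hfin
  tfae_have 1 → 9 := by
    intro h1
    refine ⟨c * (star ad * star c), star b * (ad * b), ?_, ?_⟩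
    · calc c = c * (ad * (b * c)) := hcq.symm
        _ = c * (b * c * ad) := by rw [← h1]
        _ = c * (star ad * (star c * star b)) := by rw [← hpstar]
        _ = c * (star ad * star c) * star b := by simp only [mul_assoc]
    · calc star b = star b * (b * c * ad) := hpbs.symm
        _ = star b * (ad * (b * c)) := by rw [h1]
        _ = star b * (ad * b) * c := by simp only [mul_assoc]
  tfae_have 9 → 7 := by
    rintro ⟨z₁, z₂, h₁, h₂⟩
    have hzc : z₁ * z₂ * c = c := by
      calc z₁ * z₂ * c = z₁ * (z₂ * c) := by simp only [mul_assoc]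
        _ = z₁ * star b := by rw [← h₂]
        _ = c := h₁.symm
    have h12 : z₁ * z₂ = 1 := by
      calc z₁ * z₂ = z₁ * z₂ * (c * t) := by rw [← ht, mul_one]
        _ = z₁ * z₂ * c * t := by simp only [mul_assoc]
        _ = c * t := by rw [hzc]
        _ = 1 := ht.symm
    have hzb : (1 - z₂ * z₁) * star b = 0 := by
      rw [sub_mul, one_mul]
      calc star b - z₂ * z₁ * star b = star b - z₂ * (z₁ * star b) := by
            simp only [mul_assoc]
        _ = star b - z₂ * c := by rw [← h₁]
        _ = star b - star b := by rw [← h₂]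
        _ = 0 := sub_self _
    have h21 : z₂ * z₁ = 1 := by
      have h0 := hbstar _ hzb
      exact (sub_eq_zero.mp h0).symm
    exact ⟨z₁, ⟨⟨z₁, z₂, h12, h21⟩, rfl⟩, h₁⟩
  tfae_have 7 → 8 := by
    rintro ⟨x, hu, hcx⟩
    refine ⟨x, ?_, hcx⟩
    obtain ⟨u, rfl⟩ := hu
    ext w
    simp only [Set.mem_setOf_eq, Set.mem_singleton_iff]
    constructor
    · intro hw
      calc w = ↑u⁻¹ * ((u : A) * w) := by rw [← mul_assoc, Units.inv_mul, one_mul]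
        _ = 0 := by rw [hw, mul_zero]
    · rintro rfl
      exact mul_zero _
  tfae_have 8 → 7 := by
    rintro ⟨y, hy, hcy⟩
    have hyinj : ∀ x : A, y * x = 0 → x = 0 := by
      intro x hx
      have hmem : x ∈ {x : A | y * x = 0} := hx
      rw [hy] at hmem
      simpa using hmem
    have hyr : y * (star b * (ad * b)) = 1 := by
      calc y * (star b * (ad * b)) = y * star b * (ad * b) := by simp only [mul_assoc]
        _ = c * (ad * b) := by rw [← hcy]
        _ = 1 := key
    have hry : star b * (ad * b) * y = 1 := by
      have h0 : y * (star b * (ad * b) * y - 1) = 0 := by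
        rw [mul_sub, mul_one]
        calc y * (star b * (ad * b) * y) - y
            = y * (star b * (ad * b)) * y - y := by simp only [mul_assoc]
          _ = 1 * y - y := by rw [hyr]
          _ = 0 := by rw [one_mul, sub_self]
      exact sub_eq_zero.mp (hyinj _ h0)
    exact ⟨y, ⟨⟨y, star b * (ad * b), hyr, hry⟩, rfl⟩, hcy⟩
  tfae_have 7 → 10 := by
    rintro ⟨x, hu, hcx⟩
    obtain ⟨u, rfl⟩ := hu
    have hbc : star c = b * star (u : A) := by
      rw [hcx, star_mul, star_star]
    refine ⟨star (↑u⁻¹ : A), ?_, ?_⟩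
    · rw [Set.eq_univ_iff_forall]
      intro y
      refine ⟨star (u : A) * y, ?_⟩
      calc y = 1 * y := (one_mul y).symm
        _ = star ((u : A) * ↑u⁻¹) * y := by rw [Units.mul_inv, star_one]
        _ = star (↑u⁻¹ : A) * star (u : A) * y := by rw [star_mul]
        _ = star (↑u⁻¹ : A) * (star (u : A) * y) := by rw [mul_assoc]
    · calc b = b * (star (u : A) * star (↑u⁻¹ : A)) := by
            rw [← star_mul, Units.inv_mul, star_one, mul_one]
        _ = b * star (u : A) * star (↑u⁻¹ : A) := by rw [mul_assoc]
        _ = star c * star (↑u⁻¹ : A) := by rw [← hbc]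
  tfae_have 10 → 9 := by
    rintro ⟨v, hv, hbv⟩
    obtain ⟨w, hw⟩ : ∃ x, (1 : A) = v * x := by
      have hmem : (1 : A) ∈ {y : A | ∃ x, y = v * x} := by rw [hv]; trivial
      exact hmem
    refine ⟨star w, star v, ?_, ?_⟩
    · have hbw : b * w = star c := by
        calc b * w = star c * v * w := by rw [hbv]
          _ = star c * (v * w) := by rw [mul_assoc]
          _ = star c * 1 := by rw [← hw]
          _ = star c := mul_one _
      calc c = star (star c) := (star_star c).symm
        _ = star (b * w) := by rw [hbw]
        _ = star w * star b := star_mul _ _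
    · calc star b = star (star c * v) := by rw [← hbv]
        _ = star v * star (star c) := star_mul _ _
        _ = star v * c := by rw [star_star]
  tfae_have 9 → 6 := by
    rintro ⟨z₁, z₂, h₁, h₂⟩
    ext y
    simp only [Set.mem_setOf_eq]
    constructor
    · rintro ⟨x, rfl⟩
      exact ⟨x * z₁, by rw [h₁]; simp only [mul_assoc]⟩
    · rintro ⟨x, rfl⟩
      exact ⟨x * z₂, by rw [h₂]; simp only [mul_assoc]⟩
  tfae_finish
end
end

section
/- Let A be a unital C*-algebra with unit e and let a, b, c ∈ A be such that a has a Moore-Penrose inverse a†, a = bc, b⁻¹(0) = 0, and cA = A; let b† and c† denote the Moore-Penrose inverses of b and c. Then the following statements are equivalent: (i) a is EP; (ii) a*a = c*b*bcbb† and a*a = c*b*c†cbc; (iii) aa* = bcc*b*c*((c†)*) [i.e. aa* = bcc*b*c*(c*)† where (c*)† = (c†)*] and aa* = bcbb†c*b*; (iv) a*a = c*b*bcbb† and aa* = bcc*b*c*(c†)*. -/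
noncomputable section

variable {A : Type*} [NormedRing A] [StarRing A] [CStarRing A] [CompleteSpace A]
  [NormedAlgebra ℂ A] [StarModule ℂ A]

/-- If `p` is a self-adjoint idempotent and `x* x = x* x p`, then `x = x p`. -/
theorem aux_right (x p : A) (hp : star p = p) (_hpp : p * p = p)
    (h : star x * x = star x * (x * p)) : x = x * p := by
  have h0 : star x * x - star x * (x * p) = 0 := by rw [← h, sub_self]
  have hy : star (x - x * p) * (x - x * p) = 0 := by
    have : star (x - x * p) * (x - x * p)
        = (star x * x - star x * (x * p)) - p * (star x * x - star x * (x * p)) := by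
      simp only [star_sub, star_mul, hp, sub_mul, mul_sub, mul_assoc]
      abel
    rw [this, h0, mul_zero, sub_zero]
  have := (CStarRing.star_mul_self_eq_zero_iff _).mp hy
  rw [sub_eq_zero] at this
  exact this

/-- If `p` is a self-adjoint idempotent and `x* x = x* p x`, then `x = p x`. -/
theorem aux_left (x p : A) (hp : star p = p) (hpp : p * p = p)
    (h : star x * x = star x * (p * x)) : x = p * x := by
  have h0 : star x * x - star x * (p * x) = 0 := by rw [← h, sub_self]
  have hpx : p * (p * x) = p * x := by rw [← mul_assoc, hpp]
  have hy : star (x - p * x) * (x - p * x) = 0 := by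
    have : star (x - p * x) * (x - p * x) = star x * x - star x * (p * x) := by
      simp only [star_sub, star_mul, hp, sub_mul, mul_sub, mul_assoc, hpx]
      abel
    rw [this, h0]
  have := (CStarRing.star_mul_self_eq_zero_iff _).mp hy
  rw [sub_eq_zero] at this
  exact this

/-- If `a = bc` with `b⁻¹(0) = 0`, `cA = A` and Moore–Penrose inverses `a†`, `b†`, `c†`
in a unital C*-algebra (so `(c*)† = (c†)*`), then `a` is EP iff any of the displayed pairs
of identities holds. -/
theorem ep_tfae_star_products (a b c ad bd cd : A)
    (had : IsMPInvStar a ad) (hbd : IsMPInvStar b bd) (hcd : IsMPInvStar c cd)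
    (habc : a = b * c)
    (hb : {x : A | b * x = 0} = {0}) (hc : {y : A | ∃ x, y = c * x} = Set.univ) :
    List.TFAE
      [a * ad = ad * a,
       star a * a = star c * star b * b * c * b * bd ∧
         star a * a = star c * star b * cd * c * b * c,
       a * star a = b * c * star c * star b * star c * star cd ∧
         a * star a = b * c * b * bd * star c * star b,
       star a * a = star c * star b * b * c * b * bd ∧
         a * star a = b * c * star c * star b * star c * star cd] := by
  obtain ⟨ha1, ha2, ha3, ha4⟩ := had
  obtain ⟨hb1, hb2, hb3, hb4⟩ := hbd
  obtain ⟨hc1, hc2, hc3, hc4⟩ := hcd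
  -- `b† b = 1`
  have hbdb : bd * b = 1 := by
    have h0 : b * (bd * b - 1) = 0 := by rw [mul_sub, mul_one, ← mul_assoc, hb1, sub_self]
    have hmem : (bd * b - 1) ∈ {x : A | b * x = 0} := h0
    rw [hb] at hmem
    exact sub_eq_zero.mp hmem
  -- `c c† = 1`
  have hccd : c * cd = 1 := by
    have h1 : (1 : A) ∈ {y : A | ∃ x, y = c * x} := by rw [hc]; trivial
    obtain ⟨x, hx⟩ := h1
    calc c * cd = c * cd * 1 := (mul_one _).symm
      _ = c * cd * (c * x) := by rw [← hx]
      _ = c * cd * c * x := by rw [mul_assoc (c * cd) c x]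
      _ = c * x := by rw [hc1]
      _ = 1 := hx.symm
  have hacd : a * cd = b := by rw [habc, mul_assoc, hccd, mul_one]
  have hbda : bd * a = c := by rw [habc, ← mul_assoc, hbdb, one_mul]
  -- `a a† = b b†`
  have hP : a * ad = b * bd := by
    have step1 : b * bd * (a * ad) = a * ad := by
      rw [habc]; simp only [← mul_assoc]; rw [hb1]
    have hab : a * ad * b = b := by
      rw [← hacd]; simp only [← mul_assoc]; rw [ha1]
    have step2 : a * ad * (b * bd) = b * bd := by rw [← mul_assoc, hab]
    have this1 := congrArg star step1
    rw [star_mul, ha3.star_eq, hb3.star_eq] at this1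
    exact this1.symm.trans step2
  -- `a† a = c† c`
  have hQ : ad * a = cd * c := by
    have step1 : ad * a * (cd * c) = ad * a := by
      simp only [← mul_assoc]
      rw [mul_assoc ad a cd, hacd, mul_assoc, ← habc]
    have hca : c * (ad * a) = c := by
      rw [← hbda, mul_assoc bd a (ad * a), ← mul_assoc a ad a, ha1]
    have step2 : cd * c * (ad * a) = cd * c := by rw [mul_assoc, hca]
    have this2 := congrArg star step2
    rw [star_mul, ha4.star_eq, hc4.star_eq] at this2
    exact step1.symm.trans this2
  -- projections
  have hrs : star (b * bd) = b * bd := hb3.star_eq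
  have hrp : (b * bd) * (b * bd) = b * bd := by rw [← mul_assoc, hb1]
  have hss : star (cd * c) = cd * c := hc4.star_eq
  have hsp : (cd * c) * (cd * c) = cd * c := by rw [← mul_assoc, hc2]
  -- condition (2a)
  have e2a : star a * a = star c * star b * b * c * b * bd ↔ a = a * (b * bd) := by
    have hE : star c * star b * b * c * b * bd = star a * (a * (b * bd)) := by
      rw [habc]; simp only [star_mul, mul_assoc]
    constructor
    · intro h; exact aux_right a (b * bd) hrs hrp (h.trans hE)
    · intro h; rw [hE, ← h]
  -- condition (2b)
  have e2b : star a * a = star c * star b * cd * c * b * c ↔ a = cd * c * a := by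
    have hE : star c * star b * cd * c * b * c = star a * (cd * c * a) := by
      rw [habc]; simp only [star_mul, mul_assoc]
    constructor
    · intro h; exact aux_left a (cd * c) hss hsp (h.trans hE)
    · intro h; rw [hE, ← h]
  -- condition (3a)
  have e3a : a * star a = b * c * star c * star b * star c * star cd ↔ a = cd * c * a := by
    have hsccd : star c * star cd = cd * c := by rw [← star_mul]; exact hss
    have hE : b * c * star c * star b * star c * star cd = a * (star a * (cd * c)) := by
      rw [habc]; simp only [star_mul, mul_assoc, hsccd]
    constructor
    · intro h
      have h' : star (star a) * star a = star (star a) * (star a * (cd * c)) := by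
        rw [star_star]; exact h.trans hE
      have h'' := aux_right (star a) (cd * c) hss hsp h'
      have h3 := congrArg star h''
      rw [star_star, star_mul, hss, star_star] at h3
      exact h3
    · intro h
      have hst : star a = star a * (cd * c) := by
        have h3 := congrArg star h; rw [star_mul, hss] at h3; exact h3
      rw [hE, ← hst]
  -- condition (3b)
  have e3b : a * star a = b * c * b * bd * star c * star b ↔ a = a * (b * bd) := by
    have hE : b * c * b * bd * star c * star b = a * (b * bd * star a) := by
      rw [habc]; simp only [star_mul, mul_assoc]
    constructor
    · intro h
      have h' : star (star a) * star a = star (star a) * (b * bd * star a) := by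
        rw [star_star]; exact h.trans hE
      have h'' := aux_left (star a) (b * bd) hrs hrp h'
      have h3 := congrArg star h''
      rw [star_star, star_mul, star_star, hrs] at h3
      exact h3
    · intro h
      have hst : star a = b * bd * star a := by
        have h3 := congrArg star h; rw [star_mul, hrs] at h3; exact h3
      rw [hE, ← hst]
  -- EP characterization
  have hEP : a * ad = ad * a ↔ (a = a * (b * bd) ∧ a = cd * c * a) := by
    constructor
    · intro h
      have hr_eq_s : b * bd = cd * c := by rw [← hP, h, hQ]
      constructor
      · rw [hr_eq_s, ← hQ, ← mul_assoc, ha1]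
      · rw [← hr_eq_s, ← hP, ha1]
    · rintro ⟨h1, h2⟩
      have hsr1 : cd * c * (b * bd) = cd * c := by rw [← hQ, mul_assoc, ← h1]
      have hsr2 : cd * c * (b * bd) = b * bd := by rw [← hP, ← mul_assoc, ← h2]
      rw [hP, hQ]
      exact (hsr1.symm.trans hsr2).symm
  tfae_have 1 ↔ 2 := hEP.trans (and_congr e2a e2b).symm
  tfae_have 1 ↔ 3 := hEP.trans (((and_congr e3a e3b).trans and_comm).symm)
  tfae_have 1 ↔ 4 := hEP.trans (and_congr e2a e3a).symm
  tfae_finish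
end
end

section
/- Let A be a unital C*-algebra and let a ∈ A have a Moore-Penrose inverse a†. Then the following statements are equivalent: (i) a is EP; (ii) there exists s ∈ A with s⁻¹(0) = 0 and a* = sa; (iii) there exist s₁, s₂ ∈ A with a* = s₁a and a = s₂a*; (iv) there exists u ∈ A with uA = A and a* = au; (v) there exists an invertible v ∈ A such that a*a = v(aa*); (vi) there exists an invertible w ∈ A such that a*a = (aa*)w; (vii) there exist z₁, z₂ ∈ A with a*a = az₁a* and aa* = a*z₂a. -/
noncomputable section

variable {A : Type*} [NormedRing A] [StarRing A] [CStarRing A] [CompleteSpace A]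
  [NormedAlgebra ℂ A] [StarModule ℂ A]

/-- For `a` with Moore–Penrose inverse `a†` in a unital C*-algebra: `a` is EP iff
`a* = sa` with `s⁻¹(0) = 0`, iff `a* = s₁a` and `a = s₂a*`, iff `a* = au` with
`uA = A`, iff `a*a = v(aa*)` with `v` invertible, iff `a*a = (aa*)w` with `w`
invertible, iff `a*a = az₁a*` and `aa* = a*z₂a`. -/
theorem ep_tfae_star (a ad : A) (had : IsMPInvStar a ad) :
    List.TFAE
      [a * ad = ad * a,
       ∃ s : A, {x : A | s * x = 0} = {0} ∧ star a = s * a,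
       ∃ s₁ s₂ : A, star a = s₁ * a ∧ a = s₂ * star a,
       ∃ u : A, {y : A | ∃ x, y = u * x} = Set.univ ∧ star a = a * u,
       ∃ v : A, IsUnit v ∧ star a * a = v * (a * star a),
       ∃ w : A, IsUnit w ∧ star a * a = (a * star a) * w,
       ∃ z₁ z₂ : A, star a * a = a * z₁ * star a ∧ a * star a = star a * z₂ * a] := by
  obtain ⟨m1, m2, m3, m4⟩ := had
  rw [IsSelfAdjoint] at m3 m4
  -- general toolkit (right-associated forms)
  have R1 : a * (ad * a) = a := by rw [← mul_assoc, m1]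
  have R1c : ∀ x : A, a * (ad * (a * x)) = a * x := fun x => by
    rw [← mul_assoc, ← mul_assoc, m1]
  have R2 : ad * (a * ad) = ad := by rw [← mul_assoc, m2]
  have R2c : ∀ x : A, ad * (a * (ad * x)) = ad * x := fun x => by
    rw [← mul_assoc, ← mul_assoc, m2]
  have R3 : star a * (a * ad) = star a := by
    calc star a * (a * ad) = star ((a * ad) * a) := by rw [star_mul, m3]
    _ = star a := by rw [m1]
  have R3c : ∀ x : A, star a * (a * (ad * x)) = star a * x := fun x => by
    rw [← mul_assoc, ← mul_assoc, mul_assoc (star a), R3]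
  have R4 : ad * (a * star a) = star a := by
    calc ad * (a * star a) = (ad * a) * star a := by rw [mul_assoc]
    _ = star (a * (ad * a)) := by rw [star_mul, m4]
    _ = star a := by rw [R1]
  have R4c : ∀ x : A, ad * (a * (star a * x)) = star a * x := fun x => by
    rw [← mul_assoc, ← mul_assoc, mul_assoc ad, R4]
  have R6 : (a * ad) * star ad = star ad := by
    calc (a * ad) * star ad = star (ad * (a * ad)) := by rw [star_mul, m3]
    _ = star ad := by rw [R2]
  have R7 : star a * star ad = ad * a := by rw [← star_mul, m4]
  have R7c : ∀ x : A, star a * (star ad * x) = ad * (a * x) := fun x => by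
    rw [← mul_assoc, R7, mul_assoc]
  have R8 : star ad * star a = a * ad := by rw [← star_mul, m3]
  have R8c : ∀ x : A, star ad * (star a * x) = a * (ad * x) := fun x => by
    rw [← mul_assoc, R8, mul_assoc]
  -- key reduction: a·(a·ad) = a and ad·(a·a) = a imply EP
  have key : a * (a * ad) = a → ad * (a * a) = a → a * ad = ad * a := by
    intro K2 K1
    calc a * ad = (ad * (a * a)) * ad := by rw [K1]
    _ = ad * (a * (a * ad)) := by simp only [mul_assoc]
    _ = ad * a := by rw [K2]
  -- from `star a = s * a` (any s), deduce ad * (a * a) = a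
  have keyq : ∀ s : A, star a = s * a → ad * (a * a) = a := by
    intro s heq
    have hq : star a * (ad * a) = star a := by
      conv_lhs => rw [heq]
      rw [mul_assoc, R1, ← heq]
    have h' := congrArg star hq
    rwa [star_mul, m4, star_star, mul_assoc] at h'
  tfae_have 1 → 3 := by
    intro h
    refine ⟨star a * ad, a * star ad, ?_, ?_⟩
    · rw [mul_assoc, ← h, R3]
    · rw [mul_assoc, R8, h, ← mul_assoc, m1]
  tfae_have 3 → 1 := by
    rintro ⟨s₁, s₂, h1, h2⟩
    refine key ?_ (keyq s₁ h1)
    nth_rewrite 1 [h2]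
    rw [mul_assoc, R3, ← h2]
  tfae_have 1 → 2 := by
    intro h
    have E4c : ∀ x : A, a * (ad * (star a * x)) = star a * x := fun x => by
      rw [← mul_assoc, h, mul_assoc, R4c]
    refine ⟨star a * ad + 1 - a * ad, ?_, ?_⟩
    · ext x
      simp only [Set.mem_setOf_eq, Set.mem_singleton_iff]
      constructor
      · intro hx
        have hx' : star a * (ad * x) + x - a * (ad * x) = 0 := by
          rw [← hx]; simp only [add_mul, sub_mul, one_mul, mul_assoc]
        have h5 : star a * (ad * x) = 0 := by
          have h5' := congrArg (fun y => a * (ad * y)) hx'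
          simp only [mul_add, mul_sub, mul_zero] at h5'
          rw [R1c, E4c] at h5'
          simpa using h5'
        have h6 : ad * x = 0 := by
          have h6' := congrArg (fun y => star ad * y) h5
          simp only [mul_zero] at h6'
          rw [R8c, ← mul_assoc a ad (ad * x), h, mul_assoc, R2c] at h6'
          exact h6'
        have h7 : x = a * (ad * x) := by
          rw [h5, zero_add, sub_eq_zero] at hx'
          exact hx'
        rw [h7, h6, mul_zero]
      · rintro rfl; rw [mul_zero]
    · simp only [add_mul, sub_mul, one_mul]
      rw [mul_assoc, ← h, R3, m1]
      abel
  tfae_have 2 → 1 := by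
    rintro ⟨s, hinj, heq⟩
    have inj : ∀ x : A, s * x = 0 → x = 0 := fun x hx => by
      have : x ∈ {x : A | s * x = 0} := hx
      rw [hinj] at this; exact this
    refine key ?_ (keyq s heq)
    have h0 : s * (a * (a * ad) - a) = 0 := by
      rw [mul_sub, ← mul_assoc s a (a * ad), ← heq, R3, sub_self]
    have := inj _ h0
    rwa [sub_eq_zero] at this
  tfae_have 1 → 4 := by
    intro h
    have E1 : ad * (a * a) = a := by rw [← mul_assoc, ← h, m1]
    have E3 : a * (ad * star a) = star a := by rw [← mul_assoc, h, mul_assoc, R4]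
    have E4 : star a * (ad * a) = star a := by rw [← h, R3]
    have E6c : ∀ x : A, ad * (a * (star ad * x)) = star ad * x := fun x => by
      rw [← mul_assoc, ← mul_assoc, ← h, R6]
    refine ⟨ad * star a + 1 - ad * a, ?_, ?_⟩
    · rw [Set.eq_univ_iff_forall]
      intro y
      simp only [Set.mem_setOf_eq]
      refine ⟨(star ad * a + 1 - ad * a) * y, ?_⟩
      rw [← mul_assoc]
      have hu : (ad * star a + 1 - ad * a) * (star ad * a + 1 - ad * a) = 1 := by
        simp only [add_mul, sub_mul, mul_add, mul_sub, one_mul, mul_one, mul_assoc]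
        rw [R7c, E1, E4, E6c, R2c]
        abel
      rw [hu, one_mul]
    · simp only [mul_add, mul_sub, mul_one]
      rw [E3, R1]
      abel
  tfae_have 4 → 1 := by
    rintro ⟨u, hsurj, heq⟩
    apply key
    · have hp : a * (ad * star a) = star a := by
        conv_lhs => rw [heq]
        rw [← mul_assoc, ← mul_assoc, m1, ← heq]
      have h' := congrArg star hp
      rwa [star_mul, star_mul, star_star, mul_assoc, R8] at h'
    · have h1 : (1 : A) ∈ {y : A | ∃ x, y = u * x} := by rw [hsurj]; trivial
      obtain ⟨x, hx⟩ := h1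
      have ha : star a * x = a := by
        rw [heq, mul_assoc, ← hx, mul_one]
      calc ad * (a * a) = ad * (a * (star a * x)) := by rw [ha]
      _ = star a * x := R4c x
      _ = a := ha
  tfae_have 1 → 5 := by
    intro h
    have hap : a * (a * ad) = a := by rw [h, R1]
    have hpad : (a * ad) * ad = ad := by rw [h, mul_assoc, R2]
    have hpp : (a * ad) * (a * ad) = a * ad := by rw [mul_assoc, R1c]
    have hps : (a * ad) * star a = star a := by rw [h, mul_assoc, R4]
    have hbc : (a + 1 - a * ad) * (ad + 1 - a * ad) = 1 := by
      simp only [add_mul, sub_mul, mul_add, mul_sub, one_mul, mul_one]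
      rw [hap, hpad, hpp]
      abel
    have hcb : (ad + 1 - a * ad) * (a + 1 - a * ad) = 1 := by
      simp only [add_mul, sub_mul, mul_add, mul_sub, one_mul, mul_one]
      rw [← h, R2, m1, hpp]
      abel
    have hsb : star (a + 1 - a * ad) = star a + 1 - a * ad := by
      rw [star_sub, star_add, star_one, m3]
    have hsc : star (ad + 1 - a * ad) = star ad + 1 - a * ad := by
      rw [star_sub, star_add, star_one, m3]
    have hMbb : (a + 1 - a * ad) * (star a + 1 - a * ad) = a * star a + 1 - a * ad := by
      simp only [add_mul, sub_mul, mul_add, mul_sub, one_mul, mul_one]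
      rw [hap, hps, hpp]
      abel
    have hNbb : (star a + 1 - a * ad) * (a + 1 - a * ad) = star a * a + 1 - a * ad := by
      simp only [add_mul, sub_mul, mul_add, mul_sub, one_mul, mul_one]
      rw [R3, m1, hpp]
      abel
    have hMMi : (a * star a + 1 - a * ad) *
        ((star ad + 1 - a * ad) * (ad + 1 - a * ad)) = 1 := by
      rw [← hMbb, ← hsb, ← hsc, mul_assoc, ← mul_assoc (star (a + 1 - a * ad)),
        ← star_mul, hcb, star_one, one_mul, hbc]
    have hMiM : ((star ad + 1 - a * ad) * (ad + 1 - a * ad)) *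
        (a * star a + 1 - a * ad) = 1 := by
      rw [← hMbb, ← hsb, ← hsc, mul_assoc, ← mul_assoc (ad + 1 - a * ad), hcb, one_mul,
        ← star_mul, hbc, star_one]
    have hNNi : (star a * a + 1 - a * ad) *
        ((ad + 1 - a * ad) * (star ad + 1 - a * ad)) = 1 := by
      rw [← hNbb, ← hsb, ← hsc, mul_assoc, ← mul_assoc (a + 1 - a * ad), hbc, one_mul,
        ← star_mul, hcb, star_one]
    have hNiN : ((ad + 1 - a * ad) * (star ad + 1 - a * ad)) *
        (star a * a + 1 - a * ad) = 1 := by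
      rw [← hNbb, ← hsb, ← hsc, mul_assoc, ← mul_assoc (star (ad + 1 - a * ad)),
        ← star_mul, hbc, star_one, one_mul, hcb]
    refine ⟨(star a * a + 1 - a * ad) * ((star ad + 1 - a * ad) * (ad + 1 - a * ad)),
      ?_, ?_⟩
    · exact ⟨⟨(star a * a + 1 - a * ad) * ((star ad + 1 - a * ad) * (ad + 1 - a * ad)),
        (a * star a + 1 - a * ad) * ((ad + 1 - a * ad) * (star ad + 1 - a * ad)),
        by rw [mul_assoc, ← mul_assoc ((star ad + 1 - a * ad) * (ad + 1 - a * ad)),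
             hMiM, one_mul, hNNi],
        by rw [mul_assoc, ← mul_assoc ((ad + 1 - a * ad) * (star ad + 1 - a * ad)),
             hNiN, one_mul, hMMi]⟩, rfl⟩
    · have hMp : (a * star a + 1 - a * ad) * (a * ad) = a * star a := by
        simp only [add_mul, sub_mul, one_mul]
        rw [mul_assoc, R3, hpp]
        abel
      have hMips : ((star ad + 1 - a * ad) * (ad + 1 - a * ad)) * (a * star a)
          = a * ad := by
        rw [← hMp, ← mul_assoc, hMiM, one_mul]
      have hNp : (star a * a + 1 - a * ad) * (a * ad) = star a * a := by
        simp only [add_mul, sub_mul, one_mul]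
        rw [mul_assoc, hap, hpp]
        abel
      rw [mul_assoc, hMips, hNp]
  tfae_have 5 → 6 := by
    rintro ⟨v, hv, heq⟩
    refine ⟨star v, hv.star, ?_⟩
    have h' := congrArg star heq
    simp only [star_mul, star_star] at h'
    rw [h']
  tfae_have 6 → 5 := by
    rintro ⟨w, hw, heq⟩
    refine ⟨star w, hw.star, ?_⟩
    have h' := congrArg star heq
    simp only [star_mul, star_star] at h'
    rw [h']
  tfae_have 5 → 1 := by
    rintro ⟨v, hv, heq⟩
    apply key
    · have h0 : (star a * a) * (1 - a * ad) = 0 := by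
        rw [heq, mul_assoc, mul_sub, mul_one,
          show a * star a * (a * ad) = a * star a by rw [mul_assoc, R3],
          sub_self, mul_zero]
      have h1 : star (a * (1 - a * ad)) * (a * (1 - a * ad)) = 0 := by
        rw [star_mul, mul_assoc, ← mul_assoc (star a), h0]
        simp
      have h2 : a * (1 - a * ad) = 0 := (CStarRing.star_mul_self_eq_zero_iff _).mp h1
      rw [mul_sub, mul_one, sub_eq_zero] at h2
      exact h2.symm
    · have hvi : a * star a = ↑hv.unit⁻¹ * (star a * a) := by
        rw [heq, ← mul_assoc, IsUnit.val_inv_mul, one_mul]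
      have h0 : (a * star a) * (1 - ad * a) = 0 := by
        rw [hvi, mul_assoc, mul_sub, mul_one,
          show star a * a * (ad * a) = star a * a by rw [mul_assoc, R1],
          sub_self, mul_zero]
      have h1 : star (star a * (1 - ad * a)) * (star a * (1 - ad * a)) = 0 := by
        rw [star_mul, star_star, mul_assoc, ← mul_assoc a, h0]
        simp
      have h2 : star a * (1 - ad * a) = 0 := (CStarRing.star_mul_self_eq_zero_iff _).mp h1
      rw [mul_sub, mul_one, sub_eq_zero] at h2
      have h' := congrArg star h2.symm
      rwa [star_mul, m4, star_star, mul_assoc] at h'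
  tfae_have 1 → 7 := by
    intro h
    refine ⟨ad * star a * a * star ad, star ad * a * star a * ad, ?_, ?_⟩
    · simp only [mul_assoc]
      rw [R8,
        show a * (a * ad) = a by rw [h, R1],
        ← mul_assoc a ad (star a * a), h, mul_assoc, R4c]
    · simp only [mul_assoc]
      rw [R7c,
        show star a * (ad * a) = star a by rw [← h, R3],
        ← mul_assoc ad a (a * star a), ← h, mul_assoc, R1c]
  tfae_have 7 → 1 := by
    rintro ⟨z₁, z₂, hz1, hz2⟩
    apply key
    · have h0 : star a * (a * (a * ad)) = star a * a := by
        rw [← mul_assoc, hz1]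
        simp only [mul_assoc]
        rw [R3]
      have h1 := congrArg (fun y => star ad * y) h0
      rw [R8c, R8c, R1c, R1] at h1
      exact h1
    · have h0 : ad * (a * (a * star a)) = a * star a := by
        rw [hz2]
        simp only [mul_assoc]
        rw [R4c]
      have h1 := congrArg (fun y => y * star ad) h0
      simp only [mul_assoc] at h1
      rw [R7, R1] at h1
      exact h1
  tfae_finish
end
end
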